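/- arXiv:math/0408212 — 5 statements merged into one kernel-verified Lean document; each statement's English description precedes it below -/
import Mathlib

section
/- Assume v(a_i) >= 0 for every i with r_0 <= i <= r and a_i != 0 (i.e. v is not in S). Let x be a nonzero element of L. (a) If v(x) >= 0, then v(phi^n(x)) >= 0 for every n >= 1, and the sequence min(0, v(phi^n(x)))/q^(r*n) converges to 0. (b) If v(x) < 0, then for every n >= 1 one has phi^n(x) != 0 and v(phi^n(x)) = q^(r*n) * v(x), and the sequence min(0, v(phi^n(x)))/q^(r*n) converges to v(x). (Lemma 2.4 of the paper.) -/
open Filter Topology Finset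

universe u

section Drinfeld

variable {L : Type u} [Field L] {k : Type*} [Field k]

/-- The integer value of the valuation `v` at `y` (junk value `0` at `y = 0`). -/
noncomputable def vz (v : L → WithTop ℤ) (y : L) : ℤ := (v y).untopD 0

/-- `v : L → ℤ ∪ {∞}` is a normalized discrete valuation: `v 0 = ∞`, `v` is finite and
surjective onto `ℤ` on nonzero elements, `v (x * y) = v x + v y` and
`v (x + y) ≥ min (v x) (v y)`. -/
structure IsDVal (v : L → WithTop ℤ) : Prop where
  map_zero : v 0 = ⊤
  ne_top : ∀ x : L, x ≠ 0 → v x ≠ ⊤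
  map_mul : ∀ x y : L, v (x * y) = v x + v y
  add_min : ∀ x y : L, min (v x) (v y) ≤ v (x + y)
  surj : ∀ n : ℤ, ∃ x : L, v x = (n : WithTop ℤ)

/-- `res : L → k` restricted to the valuation ring of `v` is the quotient map onto the
residue field `k` of `v`. -/
structure IsResidue (v : L → WithTop ℤ) (res : L → k) : Prop where
  map_one : res 1 = 1
  map_add : ∀ x y : L, 0 ≤ v x → 0 ≤ v y → res (x + y) = res x + res y
  map_mul : ∀ x y : L, 0 ≤ v x → 0 ≤ v y → res (x * y) = res x * res y
  eq_zero_iff : ∀ x : L, 0 ≤ v x → (res x = 0 ↔ 0 < v x)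
  surj : ∀ c : k, ∃ x : L, 0 ≤ v x ∧ res x = c

/-- The angular component of `y` at `v`, with respect to the uniformizer `π` and the
residue map `res`: the residue of `y * π ^ (-v y)`. -/
noncomputable def ac (v : L → WithTop ℤ) (π : L) (res : L → k) (y : L) : k :=
  res (y * π ^ (-(vz v y)))

/-- The `F_q`-linear map `φ(x) = ∑_{i=r₀}^{r} a i * x^(q^i)`. -/
noncomputable def phiMap (q r₀ r : ℕ) (a : ℕ → L) (x : L) : L :=
  ∑ i ∈ Finset.Icc r₀ r, a i * x ^ q ^ i

/-- The set `P_v ⊆ ℚ` of possible exceptional valuations: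
`(v(a i) - v(a j))/(q^j - q^i)` for `r₀ ≤ i < j ≤ r` with `a i ≠ 0 ≠ a j`, together with `0`. -/
def Pset (q : ℕ) (v : L → WithTop ℤ) (r₀ r : ℕ) (a : ℕ → L) : Set ℚ :=
  {0} ∪ {α : ℚ | ∃ i j : ℕ, r₀ ≤ i ∧ i < j ∧ j ≤ r ∧ a i ≠ 0 ∧ a j ≠ 0 ∧
      α = ((vz v (a i) : ℚ) - (vz v (a j) : ℚ)) / ((q : ℚ) ^ j - (q : ℚ) ^ i)}

/-- The set `J(α)` of indices where `v(a i) + q^i * α` attains its minimum. -/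
def Jset (q : ℕ) (v : L → WithTop ℤ) (r₀ r : ℕ) (a : ℕ → L) (α : ℚ) : Set ℕ :=
  {i : ℕ | r₀ ≤ i ∧ i ≤ r ∧ a i ≠ 0 ∧
    ∀ j : ℕ, r₀ ≤ j → j ≤ r → a j ≠ 0 →
      (vz v (a i) : ℚ) + (q : ℚ) ^ i * α ≤ (vz v (a j) : ℚ) + (q : ℚ) ^ j * α}

open scoped Classical in
/-- The set `R_v(α) ⊆ k_v`: `1` together with the nonzero roots of
`∑_{i ∈ J(α)} ac(a i) * X^(q^i)`. -/
noncomputable def Rset (q : ℕ) (v : L → WithTop ℤ) (π : L) (res : L → k)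
    (r₀ r : ℕ) (a : ℕ → L) (α : ℚ) : Set k :=
  {1} ∪ {γ : k | γ ≠ 0 ∧
    ∑ i ∈ Finset.Icc r₀ r,
      (if i ∈ Jset q v r₀ r a α then ac v π res (a i) * γ ^ q ^ i else 0) = 0}

/-- The exceptional condition `Exc(y)`: `v y ∈ P_v` and `ac y ∈ R_v(v y)`. -/
def Exc (q : ℕ) (v : L → WithTop ℤ) (π : L) (res : L → k)
    (r₀ r : ℕ) (a : ℕ → L) (y : L) : Prop :=
  ((vz v y : ℚ) ∈ Pset q v r₀ r a) ∧ ac v π res y ∈ Rset q v π res r₀ r a ((vz v y : ℚ))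

/-- The sequence `min(0, v(φⁿ x)) / q^(r n)` whose limit is minus the local height of `x`. -/
noncomputable def locSeq (q r : ℕ) (v : L → WithTop ℤ) (φ : L → L) (x : L) (n : ℕ) : ℝ :=
  ((min 0 (vz v (φ^[n] x)) : ℤ) : ℝ) / (q : ℝ) ^ (r * n)



section DValHelpers
variable {v : L → WithTop ℤ}

lemma vone (hv : IsDVal v) : v 1 = 0 := by
  obtain ⟨n, hn⟩ := WithTop.ne_top_iff_exists.mp (hv.ne_top 1 one_ne_zero)
  have h := hv.map_mul 1 1
  rw [one_mul, ← hn] at h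
  have hn0 : n = n + n := by exact_mod_cast h
  have hn0 : n = 0 := by omega
  rw [← hn, hn0]; rfl

lemma vnegone (hv : IsDVal v) : v (-1 : L) = 0 := by
  obtain ⟨n, hn⟩ := WithTop.ne_top_iff_exists.mp (hv.ne_top (-1) (by norm_num))
  have h := hv.map_mul (-1) (-1)
  rw [neg_mul_neg, one_mul, vone hv, ← hn] at h
  have hn0 : (0 : ℤ) = n + n := by exact_mod_cast h
  have hn0 : n = 0 := by omega
  rw [← hn, hn0]; rfl

lemma vneg (hv : IsDVal v) (y : L) : v (-y) = v y := by
  have h := hv.map_mul (-1) y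
  rw [neg_one_mul, vnegone hv, zero_add] at h
  exact h

lemma v_add_eq (hv : IsDVal v) {y z : L} (h : v y < v z) : v (y + z) = v y := by
  refine le_antisymm ?_ ?_
  · have h2 : min (v (y + z)) (v (-z)) ≤ v y := by
      have := hv.add_min (y + z) (-z)
      simpa using this
    rw [vneg hv] at h2
    rcases min_le_iff.mp h2 with h1 | h1
    · exact h1
    · exact absurd h (not_lt.mpr h1)
  · have := hv.add_min y z
    rwa [min_eq_left h.le] at this

lemma v_add_eq' (hv : IsDVal v) {y z : L} (h : v z < v y) : v (y + z) = v z := by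
  rw [add_comm]; exact v_add_eq hv h

lemma v_pow (hv : IsDVal v) (y : L) (m : ℤ) (hy : v y = (m : WithTop ℤ)) (n : ℕ) :
    v (y ^ n) = (((n : ℤ) * m : ℤ) : WithTop ℤ) := by
  induction n with
  | zero => simp [vone hv]
  | succ n ih =>
    rw [pow_succ, hv.map_mul, ih, hy, ← WithTop.coe_add]
    congr 1; push_cast; ring

lemma v_pow_nonneg (hv : IsDVal v) (y : L) (hy : 0 ≤ v y) (n : ℕ) : 0 ≤ v (y ^ n) := by
  induction n with
  | zero => simp [vone hv]
  | succ n ih => rw [pow_succ, hv.map_mul]; exact add_nonneg ih hy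

lemma v_sum_nonneg (hv : IsDVal v) {ι : Type*} (s : Finset ι) (f : ι → L)
    (h : ∀ i ∈ s, 0 ≤ v (f i)) : 0 ≤ v (∑ i ∈ s, f i) := by
  classical
  induction s using Finset.induction with
  | empty => simp [hv.map_zero]
  | @insert b t hb ih =>
    rw [Finset.sum_insert hb]
    refine le_trans ?_ (hv.add_min _ _)
    exact le_min (h b (Finset.mem_insert_self b t)) (ih fun i hix => h i (Finset.mem_insert_of_mem hix))

lemma v_sum_lt (hv : IsDVal v) {ι : Type*} (s : Finset ι) (f : ι → L) (c : ℤ)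
    (h : ∀ i ∈ s, (c : WithTop ℤ) < v (f i)) : (c : WithTop ℤ) < v (∑ i ∈ s, f i) := by
  classical
  induction s using Finset.induction with
  | empty => simp [hv.map_zero]
  | @insert b t hb ih =>
    rw [Finset.sum_insert hb]
    refine lt_of_lt_of_le ?_ (hv.add_min _ _)
    exact lt_min (h b (Finset.mem_insert_self b t)) (ih fun i hix => h i (Finset.mem_insert_of_mem hix))

lemma vz_eq (hv : IsDVal v) {y : L} (hy : y ≠ 0) : v y = ((vz v y : ℤ) : WithTop ℤ) := by
  obtain ⟨n, hn⟩ := WithTop.ne_top_iff_exists.mp (hv.ne_top y hy)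
  unfold vz; rw [← hn]; simp

lemma vz_nonneg (hy : 0 ≤ v y) : 0 ≤ vz v y := by
  unfold vz
  cases h : v y with
  | top => simp
  | coe m => rw [h] at hy; simpa using hy

lemma phi_nonneg (hv : IsDVal v) (q r₀ r : ℕ) (a : ℕ → L)
    (hnS : ∀ i ∈ Finset.Icc r₀ r, a i ≠ 0 → 0 ≤ v (a i))
    (y : L) (hy : 0 ≤ v y) : 0 ≤ v (phiMap q r₀ r a y) := by
  unfold phiMap
  apply v_sum_nonneg hv
  intro i hi
  by_cases h : a i = 0
  · simp [h, hv.map_zero]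
  · rw [hv.map_mul]
    exact add_nonneg (hnS i hi h) (v_pow_nonneg hv y hy _)

lemma phi_neg (hv : IsDVal v) (q r₀ r : ℕ) (a : ℕ → L)
    (hq2 : 2 ≤ q) (hr1 : 1 ≤ r) (hr₀r : r₀ ≤ r) (har : a r = 1)
    (hnS : ∀ i ∈ Finset.Icc r₀ r, a i ≠ 0 → 0 ≤ v (a i))
    (y : L) (M : ℤ) (hM : M < 0) (hy : v y = (M : WithTop ℤ)) :
    v (phiMap q r₀ r a y) = (((q : ℤ) ^ r * M : ℤ) : WithTop ℤ) := by
  obtain ⟨r', rfl⟩ : ∃ r', r = r' + 1 := ⟨r - 1, by omega⟩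
  unfold phiMap
  rw [Finset.sum_Icc_succ_top (by omega : r₀ ≤ r' + 1)]
  have hterm : v (a (r' + 1) * y ^ q ^ (r' + 1)) = (((q : ℤ) ^ (r' + 1) * M : ℤ) : WithTop ℤ) := by
    rw [har, one_mul, v_pow hv y M hy]
    congr 1
  have hrest : (((q : ℤ) ^ (r' + 1) * M : ℤ) : WithTop ℤ) <
      v (∑ i ∈ Finset.Icc r₀ r', a i * y ^ q ^ i) := by
    apply v_sum_lt hv
    intro i hi
    by_cases h : a i = 0
    · rw [h, zero_mul, hv.map_zero]; exact WithTop.coe_lt_top _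
    · rw [hv.map_mul, v_pow hv y M hy]
      have hi' : i ≤ r' := (Finset.mem_Icc.mp hi).2
      have hai : 0 ≤ v (a i) := hnS i (Finset.mem_Icc.mp hi |>.1 |> fun h1 =>
        Finset.mem_Icc.mpr ⟨h1, by omega⟩) h
      have hlt : (q : ℤ) ^ (r' + 1) * M < (q ^ i : ℕ) * M := by
        have hq' : (q : ℤ) ^ i < (q : ℤ) ^ (r' + 1) := by
          apply pow_lt_pow_right₀ (by exact_mod_cast hq2 |>.trans_lt' (by norm_num)) (by omega)
        push_cast
        nlinarith
      calc (((q : ℤ) ^ (r' + 1) * M : ℤ) : WithTop ℤ)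
          < (((q ^ i : ℕ) * M : ℤ) : WithTop ℤ) := by exact_mod_cast hlt
        _ ≤ v (a i) + (((q ^ i : ℕ) * M : ℤ) : WithTop ℤ) := le_add_of_nonneg_left hai
  rw [v_add_eq' hv (hterm ▸ hrest), hterm]

end DValHelpers

/-- Lemma 2.4: if no coefficient `a i` has a pole at `v` (i.e. `v ∉ S`), then:
(a) if `v(x) ≥ 0` then `v(φⁿ(x)) ≥ 0` for all `n ≥ 1` and the local-height sequence tends
to `0`; (b) if `v(x) < 0` then `v(φⁿ(x)) = q^(rn) v(x)` for all `n ≥ 1` and the sequence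
tends to `v(x)`. -/
theorem statement2
    (p q : ℕ) (hp : p.Prime) (hq : ∃ s : ℕ, 0 < s ∧ q = p ^ s)
    [CharP L p] (F : Subfield L) (hF : Nat.card F = q)
    (v : L → WithTop ℤ) (hv : IsDVal v)
    (r₀ r : ℕ) (hr1 : 1 ≤ r) (hr₀r : r₀ ≤ r)
    (a : ℕ → L) (har₀ : a r₀ ≠ 0) (har : a r = 1)
    (hnS : ∀ i ∈ Finset.Icc r₀ r, a i ≠ 0 → 0 ≤ v (a i))
    (x : L) (hx : x ≠ 0) :
    (0 ≤ v x →
      (∀ n : ℕ, 1 ≤ n → 0 ≤ v ((phiMap q r₀ r a)^[n] x)) ∧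
      Filter.Tendsto (locSeq q r v (phiMap q r₀ r a) x) Filter.atTop (nhds (0 : ℝ))) ∧
    (v x < 0 →
      (∀ n : ℕ, 1 ≤ n → (phiMap q r₀ r a)^[n] x ≠ 0 ∧
        v ((phiMap q r₀ r a)^[n] x) = (((q : ℤ) ^ (r * n) * vz v x : ℤ) : WithTop ℤ)) ∧
      Filter.Tendsto (locSeq q r v (phiMap q r₀ r a) x) Filter.atTop (nhds (vz v x : ℝ))) := by
  have hq2 : 2 ≤ q := by
    obtain ⟨s, hs, rfl⟩ := hq
    calc 2 = 2 ^ 1 := by norm_num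
      _ ≤ p ^ s := Nat.pow_le_pow_left hp.two_le s |>.trans' (Nat.pow_le_pow_right (by norm_num) hs)
  have hq0 : (0 : ℝ) < (q : ℝ) := by positivity
  set φ := phiMap q r₀ r a with hφ
  constructor
  · intro hx0
    have key : ∀ n : ℕ, 0 ≤ v (φ^[n] x) := by
      intro n
      induction n with
      | zero => simpa using hx0
      | succ n ih =>
        rw [Function.iterate_succ_apply']
        exact phi_nonneg hv q r₀ r a hnS _ ih
    refine ⟨fun n _ => key n, ?_⟩
    have heq : (fun _ : ℕ => (0 : ℝ)) =ᶠ[Filter.atTop] locSeq q r v φ x := by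
      filter_upwards [Filter.eventually_ge_atTop 1] with n _
      unfold locSeq
      rw [min_eq_left (vz_nonneg (key n))]
      simp
    exact Filter.Tendsto.congr' heq tendsto_const_nhds
  · intro hxneg
    set m := vz v x with hm
    have hvx : v x = (m : WithTop ℤ) := vz_eq hv hx
    have hmneg : m < 0 := by
      rw [hvx] at hxneg
      exact_mod_cast hxneg
    have key : ∀ n : ℕ, v (φ^[n] x) = (((q : ℤ) ^ (r * n) * m : ℤ) : WithTop ℤ) := by
      intro n
      induction n with
      | zero => simpa using hvx
      | succ n ih =>
        rw [Function.iterate_succ_apply']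
        have hMneg : (q : ℤ) ^ (r * n) * m < 0 := by
          apply mul_neg_of_pos_of_neg (pow_pos (by exact_mod_cast hq2.trans_lt' (by norm_num)) _) hmneg
        rw [phi_neg hv q r₀ r a hq2 hr1 hr₀r har hnS _ _ hMneg ih]
        congr 1
        have : r * (n + 1) = r * n + r := by ring
        rw [this, pow_add]; ring
    have hne : ∀ n : ℕ, φ^[n] x ≠ 0 := by
      intro n h
      have := key n
      rw [h, hv.map_zero] at this
      exact (WithTop.coe_ne_top (α := ℤ)) this.symm
    refine ⟨fun n _ => ⟨hne n, key n⟩, ?_⟩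
    have heq : (fun _ : ℕ => (m : ℝ)) =ᶠ[Filter.atTop] locSeq q r v φ x := by
      filter_upwards with n
      unfold locSeq
      have hvz : vz v (φ^[n] x) = (q : ℤ) ^ (r * n) * m := by
        unfold vz; rw [key n]; rfl
      have hMneg : (q : ℤ) ^ (r * n) * m ≤ 0 := by
        apply le_of_lt
        exact mul_neg_of_pos_of_neg (pow_pos (by exact_mod_cast hq2.trans_lt' (by norm_num)) _) hmneg
      rw [hvz, min_eq_right hMneg]
      push_cast
      field_simp
    exact Filter.Tendsto.congr' heq tendsto_const_nhds


end Drinfeld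
end

section
/- Let x and x' be nonzero elements of L such that Exc(x) fails, Exc(x') fails, and v(phi(x)) = v(phi(x')) (equality in Z union {+infinity}). Then v(x) = v(x'). (Lemma 2.9 of the paper: there are no two elements with different valuations, both outside the exceptional set, whose images under phi have equal valuation.) -/
open Filter Topology Finset

universe u

section Drinfeld

variable {L : Type u} [Field L] {k : Type*} [Field k]

namespace Lemma29aux

lemma v_coe {v : L → WithTop ℤ} (hv : IsDVal v) {x : L} (hx : x ≠ 0) :
    v x = ((vz v x : ℤ) : WithTop ℤ) := by
  obtain ⟨n, hn⟩ := WithTop.ne_top_iff_exists.mp (hv.ne_top x hx)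
  rw [← hn]; simp [vz, ← hn]

lemma vz_one {v : L → WithTop ℤ} (hv : IsDVal v) : vz v (1 : L) = 0 := by
  have h1 : v (1 : L) = v 1 + v 1 := by simpa using hv.map_mul 1 1
  obtain ⟨n, hn⟩ := WithTop.ne_top_iff_exists.mp (hv.ne_top 1 one_ne_zero)
  rw [← hn] at h1
  have h2 : (n : WithTop ℤ) = ((n + n : ℤ) : WithTop ℤ) := by push_cast; exact h1
  have hn0 : n = 0 := by have := WithTop.coe_inj.mp h2; omega
  simp [vz, ← hn, hn0]

lemma v_one {v : L → WithTop ℤ} (hv : IsDVal v) : v (1 : L) = 0 := by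
  rw [v_coe hv one_ne_zero, vz_one hv]; rfl

lemma vz_mul {v : L → WithTop ℤ} (hv : IsDVal v) {x y : L} (hx : x ≠ 0) (hy : y ≠ 0) :
    vz v (x * y) = vz v x + vz v y := by
  have h := hv.map_mul x y
  rw [v_coe hv (mul_ne_zero hx hy), v_coe hv hx, v_coe hv hy, ← WithTop.coe_add] at h
  exact WithTop.coe_inj.mp h

lemma vz_pow {v : L → WithTop ℤ} (hv : IsDVal v) {x : L} (hx : x ≠ 0) (n : ℕ) :
    vz v (x ^ n) = n * vz v x := by
  induction n with
  | zero => simpa using vz_one hv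
  | succ n ih =>
      rw [pow_succ, vz_mul hv (pow_ne_zero n hx) hx, ih]; push_cast; ring

lemma vz_inv {v : L → WithTop ℤ} (hv : IsDVal v) {x : L} (hx : x ≠ 0) :
    vz v x⁻¹ = -vz v x := by
  have h : vz v (x * x⁻¹) = vz v x + vz v x⁻¹ := vz_mul hv hx (inv_ne_zero hx)
  rw [mul_inv_cancel₀ hx, vz_one hv] at h
  omega

lemma vz_zpow {v : L → WithTop ℤ} (hv : IsDVal v) {x : L} (hx : x ≠ 0) (t : ℤ) :
    vz v (x ^ t) = t * vz v x := by
  cases t with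
  | ofNat n => rw [Int.ofNat_eq_coe, zpow_natCast, vz_pow hv hx]
  | negSucc n =>
      rw [zpow_negSucc, vz_inv hv (pow_ne_zero _ hx), vz_pow hv hx]
      simp [Int.negSucc_eq]; ring

lemma pi_ne_zero {v : L → WithTop ℤ} (hv : IsDVal v) {π : L} (hπ : v π = 1) : π ≠ 0 := by
  intro h; rw [h, hv.map_zero] at hπ; exact (by simp : (⊤ : WithTop ℤ) ≠ 1) hπ

lemma vz_pi {v : L → WithTop ℤ} (hv : IsDVal v) {π : L} (hπ : v π = 1) : vz v π = 1 := by
  have := v_coe hv (pi_ne_zero hv hπ)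
  rw [hπ] at this
  exact WithTop.coe_inj.mp (by exact_mod_cast this.symm)

lemma v_zpow_pi {v : L → WithTop ℤ} (hv : IsDVal v) {π : L} (hπ : v π = 1) (t : ℤ) :
    v (π ^ t) = (t : WithTop ℤ) := by
  rw [v_coe hv (zpow_ne_zero t (pi_ne_zero hv hπ)), vz_zpow hv (pi_ne_zero hv hπ),
    vz_pi hv hπ, mul_one]

lemma v_sum_ge {v : L → WithTop ℤ} (hv : IsDVal v) {ι : Type*} (s : Finset ι) (f : ι → L)
    (c : WithTop ℤ) (h : ∀ i ∈ s, c ≤ v (f i)) : c ≤ v (∑ i ∈ s, f i) := by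
  induction s using Finset.cons_induction with
  | empty => simp [hv.map_zero]
  | cons i s hi ih =>
      rw [Finset.sum_cons]
      refine le_trans (le_min (h i (Finset.mem_cons_self i s)) ?_) (hv.add_min _ _)
      exact ih fun j hj => h j (Finset.mem_cons_of_mem hj)

lemma res_zero {v : L → WithTop ℤ} {res : L → k} (hv : IsDVal v) (hres : IsResidue v res) :
    res (0 : L) = 0 := by
  have h : res ((0 : L) + 0) = res 0 + res 0 :=
    hres.map_add 0 0 (by simp [hv.map_zero]) (by simp [hv.map_zero])
  simpa using h.symm

lemma v_pow_nonneg {v : L → WithTop ℤ} (hv : IsDVal v) {u : L} (hu : 0 ≤ v u) (n : ℕ) :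
    0 ≤ v (u ^ n) := by
  induction n with
  | zero => simp [v_one hv]
  | succ n ih => rw [pow_succ, hv.map_mul]; exact add_nonneg ih hu

lemma res_pow {v : L → WithTop ℤ} {res : L → k} (hv : IsDVal v) (hres : IsResidue v res)
    {u : L} (hu : 0 ≤ v u) (n : ℕ) : res (u ^ n) = res u ^ n := by
  induction n with
  | zero => simpa using hres.map_one
  | succ n ih =>
      rw [pow_succ, pow_succ, ← ih, hres.map_mul _ _ (v_pow_nonneg hv hu n) hu]

lemma res_sum {v : L → WithTop ℤ} {res : L → k} (hv : IsDVal v) (hres : IsResidue v res)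
    {ι : Type*} (s : Finset ι) (f : ι → L) (h : ∀ i ∈ s, 0 ≤ v (f i)) :
    res (∑ i ∈ s, f i) = ∑ i ∈ s, res (f i) := by
  induction s using Finset.cons_induction with
  | empty => simpa using res_zero hv hres
  | cons i s hi ih =>
      rw [Finset.sum_cons, Finset.sum_cons,
        hres.map_add _ _ (h i (Finset.mem_cons_self i s))
          (v_sum_ge hv s f 0 fun j hj => h j (Finset.mem_cons_of_mem hj)),
        ih fun j hj => h j (Finset.mem_cons_of_mem hj)]

lemma v_ac_arg {v : L → WithTop ℤ} (hv : IsDVal v) {π : L} (hπ : v π = 1) {y : L}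
    (hy : y ≠ 0) : v (y * π ^ (-(vz v y))) = 0 := by
  rw [hv.map_mul, v_coe hv hy, v_zpow_pi hv hπ]
  rw [← WithTop.coe_add]
  simp

lemma ac_ne_zero {v : L → WithTop ℤ} {res : L → k} (hv : IsDVal v) (hres : IsResidue v res)
    {π : L} (hπ : v π = 1) {y : L} (hy : y ≠ 0) : ac v π res y ≠ 0 := by
  unfold ac
  intro h
  have h0 := v_ac_arg hv hπ (y := y) hy
  have := (hres.eq_zero_iff _ h0.ge).mp h
  rw [h0] at this
  exact lt_irrefl _ this

open scoped Classical in
lemma key {v : L → WithTop ℤ} (hv : IsDVal v) {π : L} (hπ : v π = 1)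
    {res : L → k} (hres : IsResidue v res)
    (q r₀ r : ℕ) (hq2 : 2 ≤ q) (hr₀r : r₀ ≤ r)
    (a : ℕ → L) {y : L} (hy : y ≠ 0) (hexc : ¬ Exc q v π res r₀ r a y)
    (hS : ((Finset.Icc r₀ r).filter (fun i => a i ≠ 0)).Nonempty) :
    v (phiMap q r₀ r a y) =
      ((((Finset.Icc r₀ r).filter (fun i => a i ≠ 0)).inf' hS
        (fun i => vz v (a i) + (q : ℤ) ^ i * vz v y) : ℤ) : WithTop ℤ) := by
  have hπ0 : π ≠ 0 := pi_ne_zero hv hπ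
  set m : ℤ := vz v y with hm
  set S : Finset ℕ := (Finset.Icc r₀ r).filter (fun i => a i ≠ 0) with hSdef
  set g : ℕ → ℤ := fun i => vz v (a i) + (q : ℤ) ^ i * m with hg
  set M : ℤ := S.inf' hS g with hM
  set t : ℕ → L := fun i => a i * y ^ q ^ i * π ^ (-M : ℤ) with ht
  have hM_le : ∀ i ∈ S, M ≤ g i := fun i hi => Finset.inf'_le _ hi
  have htv : ∀ i ∈ S, v (t i) = ((g i - M : ℤ) : WithTop ℤ) := by
    intro i hi
    have hai : a i ≠ 0 := (Finset.mem_filter.mp hi).2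
    have htne : a i * y ^ q ^ i * π ^ (-M : ℤ) ≠ 0 :=
      mul_ne_zero (mul_ne_zero hai (pow_ne_zero _ hy)) (zpow_ne_zero _ hπ0)
    rw [ht, v_coe hv htne,
      vz_mul hv (mul_ne_zero hai (pow_ne_zero _ hy)) (zpow_ne_zero _ hπ0),
      vz_mul hv hai (pow_ne_zero _ hy), vz_pow hv hy,
      vz_zpow hv hπ0, vz_pi hv hπ]
    congr 1
    have : ((q ^ i : ℕ) : ℤ) = (q : ℤ) ^ i := by push_cast; ring
    rw [this]; ring
  have htv0 : ∀ i ∈ Finset.Icc r₀ r, 0 ≤ v (t i) := by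
    intro i hi
    by_cases hai : a i = 0
    · simp [ht, hai, hv.map_zero]
    · have hiS : i ∈ S := Finset.mem_filter.mpr ⟨hi, hai⟩
      rw [htv i hiS]
      exact_mod_cast sub_nonneg.mpr (hM_le i hiS)
  -- characterization of Jset
  have hJ : ∀ i ∈ Finset.Icc r₀ r,
      (i ∈ Jset q v r₀ r a (m : ℚ) ↔ (a i ≠ 0 ∧ g i = M)) := by
    intro i hi
    obtain ⟨hi1, hi2⟩ := Finset.mem_Icc.mp hi
    constructor
    · rintro ⟨-, -, hai, hall⟩
      refine ⟨hai, le_antisymm ?_ (hM_le i (Finset.mem_filter.mpr ⟨hi, hai⟩))⟩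
      refine Finset.le_inf' hS g ?_
      intro j hj
      obtain ⟨hjI, haj⟩ := Finset.mem_filter.mp hj
      obtain ⟨hj1, hj2⟩ := Finset.mem_Icc.mp hjI
      have hQ := hall j hj1 hj2 haj
      have hZ : vz v (a i) + (q : ℤ) ^ i * m ≤ vz v (a j) + (q : ℤ) ^ j * m := by
        exact_mod_cast hQ
      exact hZ
    · rintro ⟨hai, hgi⟩
      refine ⟨hi1, hi2, hai, ?_⟩
      intro j hj1 hj2 haj
      have hjS : j ∈ S := Finset.mem_filter.mpr ⟨Finset.mem_Icc.mpr ⟨hj1, hj2⟩, haj⟩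
      have hZ : g i ≤ g j := hgi ▸ hM_le j hjS
      have hZ' : vz v (a i) + (q : ℤ) ^ i * m ≤ vz v (a j) + (q : ℤ) ^ j * m := hZ
      exact_mod_cast hZ'
  -- residue of each term
  have hres_t : ∀ i ∈ Finset.Icc r₀ r,
      res (t i) = if i ∈ Jset q v r₀ r a (m : ℚ) then
        ac v π res (a i) * (ac v π res y) ^ q ^ i else 0 := by
    intro i hi
    by_cases hJi : i ∈ Jset q v r₀ r a (m : ℚ)
    · rw [if_pos hJi]
      obtain ⟨hai, hgi⟩ := (hJ i hi).mp hJi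
      have hgi' : vz v (a i) + (q : ℤ) ^ i * m = M := hgi
      have hsplit : (π : L) ^ (-M : ℤ)
          = π ^ (-(vz v (a i))) * (π ^ (-(m : ℤ))) ^ (q ^ i) := by
        rw [← zpow_natCast (π ^ (-(m : ℤ))), ← zpow_mul, ← zpow_add₀ hπ0]
        congr 1
        have hcast : ((q ^ i : ℕ) : ℤ) = (q : ℤ) ^ i := by push_cast; ring
        rw [hcast]
        linarith [hgi']
      have hfact : t i = (a i * π ^ (-(vz v (a i)))) * (y * π ^ (-(vz v y))) ^ q ^ i := by
        rw [ht]
        simp only []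
        rw [hsplit, mul_pow, ← hm]
        ring
      rw [hfact, hres.map_mul _ _ (v_ac_arg hv hπ hai).ge
        (v_pow_nonneg hv (v_ac_arg hv hπ hy).ge _),
        res_pow hv hres (v_ac_arg hv hπ hy).ge]
      rfl
    · rw [if_neg hJi]
      by_cases hai : a i = 0
      · simp [ht, hai, res_zero hv hres]
      · have hiS : i ∈ S := Finset.mem_filter.mpr ⟨hi, hai⟩
        have hne : g i ≠ M := fun h => hJi ((hJ i hi).mpr ⟨hai, h⟩)
        have hpos : 0 < v (t i) := by
          rw [htv i hiS]
          exact_mod_cast sub_pos.mpr (lt_of_le_of_ne (hM_le i hiS) (Ne.symm hne))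
        exact (hres.eq_zero_iff _ (htv0 i hi)).mpr hpos
  -- the scaled sum
  have hz : phiMap q r₀ r a y * π ^ (-M : ℤ) = ∑ i ∈ Finset.Icc r₀ r, t i := by
    rw [phiMap, Finset.sum_mul]
  have hvz0 : 0 ≤ v (∑ i ∈ Finset.Icc r₀ r, t i) := v_sum_ge hv _ _ 0 htv0
  have hresz : res (∑ i ∈ Finset.Icc r₀ r, t i)
      = ∑ i ∈ Finset.Icc r₀ r, (if i ∈ Jset q v r₀ r a (m : ℚ) then
          ac v π res (a i) * (ac v π res y) ^ q ^ i else 0) := by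
    rw [res_sum hv hres _ _ htv0]
    exact Finset.sum_congr rfl hres_t
  -- the residue sum is nonzero
  have hfilter : (Finset.Icc r₀ r).filter (fun i => i ∈ Jset q v r₀ r a (m : ℚ))
      = S.filter (fun i => g i = M) := by
    ext i
    simp only [Finset.mem_filter, hSdef]
    constructor
    · rintro ⟨hi, hJi⟩
      obtain ⟨hai, hgi⟩ := (hJ i hi).mp hJi
      exact ⟨⟨hi, hai⟩, hgi⟩
    · rintro ⟨⟨hi, hai⟩, hgi⟩
      exact ⟨hi, (hJ i hi).mpr ⟨hai, hgi⟩⟩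
  have hsum_ne : (∑ i ∈ Finset.Icc r₀ r, (if i ∈ Jset q v r₀ r a (m : ℚ) then
      ac v π res (a i) * (ac v π res y) ^ q ^ i else 0)) ≠ 0 := by
    rw [← Finset.sum_filter, hfilter]
    obtain ⟨i₀, hi₀S, hMi₀⟩ := Finset.exists_mem_eq_inf' hS g
    by_cases hsing : ∀ j ∈ S, g j = M → j = i₀
    · have hone : S.filter (fun i => g i = M) = {i₀} := by
        ext j
        simp only [Finset.mem_filter, Finset.mem_singleton]
        constructor
        · rintro ⟨hjS, hgj⟩; exact hsing j hjS hgj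
        · rintro rfl; exact ⟨hi₀S, hMi₀.symm⟩
      rw [hone, Finset.sum_singleton]
      exact mul_ne_zero (ac_ne_zero hv hres hπ (Finset.mem_filter.mp hi₀S).2)
        (pow_ne_zero _ (ac_ne_zero hv hres hπ hy))
    · push_neg at hsing
      obtain ⟨j, hjS, hgj, hji⟩ := hsing
      -- two distinct minimizers: m ∈ Pset
      have hgij : g j = g i₀ := by rw [hgj, hM]; exact hMi₀
      have hpair : ∀ i₁ j₁ : ℕ, i₁ ∈ S → j₁ ∈ S → i₁ < j₁ → g i₁ = g j₁ →
          ((m : ℚ)) ∈ Pset q v r₀ r a := by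
        intro i₁ j₁ hi₁ hj₁ hlt hgeq
        have hai₁ : a i₁ ≠ 0 := (Finset.mem_filter.mp hi₁).2
        have haj₁ : a j₁ ≠ 0 := (Finset.mem_filter.mp hj₁).2
        have hbi := Finset.mem_Icc.mp (Finset.mem_filter.mp hi₁).1
        have hbj := Finset.mem_Icc.mp (Finset.mem_filter.mp hj₁).1
        right
        refine ⟨i₁, j₁, hbi.1, hlt, hbj.2, hai₁, haj₁, ?_⟩
        have hgeq' : vz v (a i₁) + (q : ℤ) ^ i₁ * m = vz v (a j₁) + (q : ℤ) ^ j₁ * m := hgeq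
        have hQ : (vz v (a i₁) : ℚ) + (q : ℚ) ^ i₁ * (m : ℚ)
            = (vz v (a j₁) : ℚ) + (q : ℚ) ^ j₁ * (m : ℚ) := by exact_mod_cast hgeq'
        have hqQ : (1 : ℚ) < (q : ℚ) := by exact_mod_cast hq2
        have hdne : (q : ℚ) ^ j₁ - (q : ℚ) ^ i₁ ≠ 0 :=
          sub_ne_zero.mpr (ne_of_gt (pow_lt_pow_right₀ hqQ hlt))
        rw [eq_div_iff hdne]
        linarith [hQ]
      have hP : ((m : ℚ)) ∈ Pset q v r₀ r a := by
        rcases lt_trichotomy j i₀ with h | h | h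
        · exact hpair j i₀ hjS hi₀S h hgij
        · exact absurd h hji
        · exact hpair i₀ j hi₀S hjS h hgij.symm
      have hR : ac v π res y ∉ Rset q v π res r₀ r a (m : ℚ) := fun h => hexc ⟨hP, h⟩
      intro hzero
      apply hR
      right
      refine ⟨ac_ne_zero hv hres hπ hy, ?_⟩
      rw [← Finset.sum_filter, hfilter]
      exact hzero
  have hres_ne : res (∑ i ∈ Finset.Icc r₀ r, t i) ≠ 0 := by rw [hresz]; exact hsum_ne
  have hveq0 : v (∑ i ∈ Finset.Icc r₀ r, t i) = 0 := by
    have hnlt : ¬ 0 < v (∑ i ∈ Finset.Icc r₀ r, t i) :=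
      fun h => hres_ne ((hres.eq_zero_iff _ hvz0).mpr h)
    exact le_antisymm (not_lt.mp hnlt) hvz0
  have hphi : phiMap q r₀ r a y = (∑ i ∈ Finset.Icc r₀ r, t i) * π ^ (M : ℤ) := by
    rw [← hz, mul_assoc, ← zpow_add₀ hπ0]
    simp
  rw [hphi, hv.map_mul, hveq0, v_zpow_pi hv hπ, zero_add]

end Lemma29aux

/-- Lemma 2.9: if `Exc(x)` and `Exc(x')` both fail and `v(φ(x)) = v(φ(x'))`
(in `ℤ ∪ {∞}`), then `v(x) = v(x')`. -/
theorem statement5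
    (p q : ℕ) (hp : p.Prime) (hq : ∃ s : ℕ, 0 < s ∧ q = p ^ s)
    [CharP L p] (F : Subfield L) (hF : Nat.card F = q)
    (v : L → WithTop ℤ) (hv : IsDVal v)
    (π : L) (hπ : v π = 1) (res : L → k) (hres : IsResidue v res)
    (r₀ r : ℕ) (hr1 : 1 ≤ r) (hr₀r : r₀ ≤ r)
    (a : ℕ → L) (har₀ : a r₀ ≠ 0) (har : a r = 1)
    (x x' : L) (hx : x ≠ 0) (hx' : x' ≠ 0)
    (hexc : ¬ Exc q v π res r₀ r a x) (hexc' : ¬ Exc q v π res r₀ r a x')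
    (heq : v (phiMap q r₀ r a x) = v (phiMap q r₀ r a x')) :
    v x = v x' := by
  classical
  have hq2 : 2 ≤ q := by
    obtain ⟨s, hs, rfl⟩ := hq
    calc 2 ≤ p := hp.two_le
    _ ≤ p ^ s := Nat.le_self_pow (by omega) p
  have hS : ((Finset.Icc r₀ r).filter (fun i => a i ≠ 0)).Nonempty :=
    ⟨r₀, Finset.mem_filter.mpr ⟨Finset.mem_Icc.mpr ⟨le_refl r₀, hr₀r⟩, har₀⟩⟩
  have h1 := Lemma29aux.key hv hπ hres q r₀ r hq2 hr₀r a hx hexc hS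
  have h2 := Lemma29aux.key hv hπ hres q r₀ r hq2 hr₀r a hx' hexc' hS
  rw [h1, h2] at heq
  have hMeq := WithTop.coe_inj.mp heq
  set S : Finset ℕ := (Finset.Icc r₀ r).filter (fun i => a i ≠ 0) with hSdef
  have hmono : ∀ m1 m2 : ℤ, m1 < m2 →
      S.inf' hS (fun i => vz v (a i) + (q : ℤ) ^ i * m1)
        < S.inf' hS (fun i => vz v (a i) + (q : ℤ) ^ i * m2) := by
    intro m1 m2 hlt
    obtain ⟨i, hi, hieq⟩ := Finset.exists_mem_eq_inf' hS
      (fun i => vz v (a i) + (q : ℤ) ^ i * m2)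
    rw [hieq]
    refine lt_of_le_of_lt (Finset.inf'_le _ hi) ?_
    have hqpos : (0 : ℤ) < (q : ℤ) ^ i := pow_pos (by exact_mod_cast lt_of_lt_of_le two_pos hq2) i
    have := mul_lt_mul_of_pos_left hlt hqpos
    omega
  have hmm : vz v x = vz v x' := by
    rcases lt_trichotomy (vz v x) (vz v x') with h | h | h
    · exact absurd hMeq (ne_of_lt (hmono _ _ h))
    · exact h
    · exact absurd hMeq.symm (ne_of_lt (hmono _ _ h))
  rw [Lemma29aux.v_coe hv hx, Lemma29aux.v_coe hv hx', hmm]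

end Drinfeld
end

section
/- For every integer alpha_1 and every gamma_1 in k_v there exists a subset T of k_v with at most q^r elements such that: for every nonzero x in L with Exc(x) false, v(phi(x)) = alpha_1 and ac(phi(x)) = gamma_1, one has ac(x) in T. (Lemma 2.10 of the paper: given the valuation and angular component of phi(x), there are at most q^r possible values for the angular component of x.) -/
open Filter Topology Finset

universe u

section Drinfeld

variable {L : Type u} [Field L] {k : Type*} [Field k]

section helpers
variable {v : L → WithTop ℤ} (hv : IsDVal v)
include hv

lemma vz_spec {x : L} (hx : x ≠ 0) : v x = (vz v x : WithTop ℤ) := by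
  lift v x to ℤ using hv.ne_top x hx with m hm
  simp [vz, ← hm]

lemma v_one : v 1 = 0 := by
  have h := hv.map_mul 1 1
  rw [mul_one] at h
  lift v 1 to ℤ using hv.ne_top 1 one_ne_zero with m hm
  have : m = m + m := by exact_mod_cast h
  have : m = 0 := by omega
  simp [this]

lemma vz_mul {x y : L} (hx : x ≠ 0) (hy : y ≠ 0) :
    vz v (x * y) = vz v x + vz v y := by
  have h := hv.map_mul x y
  rw [vz_spec hv hx, vz_spec hv hy, vz_spec hv (mul_ne_zero hx hy)] at h
  exact_mod_cast h

lemma vz_pow {x : L} (hx : x ≠ 0) (n : ℕ) : vz v (x ^ n) = n * vz v x := by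
  induction n with
  | zero => simp [vz, v_one hv]
  | succ n ih =>
      rw [pow_succ, vz_mul hv (pow_ne_zero n hx) hx, ih]; push_cast; ring

lemma v_inv {x : L} (hx : x ≠ 0) : v x⁻¹ = ((-(vz v x) : ℤ) : WithTop ℤ) := by
  have h := hv.map_mul x x⁻¹
  rw [mul_inv_cancel₀ hx, v_one hv, vz_spec hv hx] at h
  rw [vz_spec hv (inv_ne_zero hx)]
  rw [vz_spec hv (inv_ne_zero hx)] at h
  have : vz v x + vz v x⁻¹ = 0 := by exact_mod_cast h.symm
  congr 1; omega

lemma v_zpow {π : L} (hπ : v π = 1) (n : ℤ) : v (π ^ n) = (n : WithTop ℤ) := by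
  have hπ0 : π ≠ 0 := by intro h; rw [h, hv.map_zero] at hπ; exact absurd hπ (by simp)
  have hvzπ : vz v π = 1 := by
    have := vz_spec hv hπ0; rw [hπ] at this
    exact_mod_cast this.symm
  obtain ⟨m, rfl | rfl⟩ := n.eq_nat_or_neg
  · rw [zpow_natCast, vz_spec hv (pow_ne_zero m hπ0), vz_pow hv hπ0 m, hvzπ, mul_one]
  · rw [zpow_neg, zpow_natCast, v_inv hv (pow_ne_zero m hπ0),
      vz_pow hv hπ0 m, hvzπ, mul_one]

lemma v_sum_ge {ι : Type*} (s : Finset ι) (f : ι → L) (m : WithTop ℤ)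
    (h : ∀ i ∈ s, m ≤ v (f i)) : m ≤ v (∑ i ∈ s, f i) := by
  classical
  induction s using Finset.induction_on with
  | empty => simp [hv.map_zero]
  | @insert j s' hns ih =>
      rw [Finset.sum_insert hns]
      refine le_trans ?_ (hv.add_min _ _)
      exact le_min (h j (Finset.mem_insert_self j s'))
        (ih fun i hi => h i (Finset.mem_insert_of_mem hi))

omit hv in
lemma v_unit_part' {v : L → WithTop ℤ} (hv : IsDVal v) {π : L} (hπ : v π = 1)
    {y : L} (hy : y ≠ 0) : v (y * π ^ (-(vz v y))) = 0 := by
  rw [hv.map_mul, vz_spec hv hy, v_zpow hv hπ, ← WithTop.coe_add]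
  simp

section res
variable {res : L → k} (hres : IsResidue v res)
include hres

lemma res_zero : res 0 = 0 := by
  rw [hres.eq_zero_iff 0 (by simp [hv.map_zero]), hv.map_zero]
  exact WithTop.coe_lt_top 0

lemma res_sum {ι : Type*} (s : Finset ι) (f : ι → L)
    (h : ∀ i ∈ s, 0 ≤ v (f i)) : res (∑ i ∈ s, f i) = ∑ i ∈ s, res (f i) := by
  classical
  induction s using Finset.induction_on with
  | empty => simpa using res_zero hv hres
  | @insert j s' hns ih =>
      rw [Finset.sum_insert hns, Finset.sum_insert hns,
        hres.map_add _ _ (h j (Finset.mem_insert_self j s'))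
          (v_sum_ge hv s' f 0 fun i hi => h i (Finset.mem_insert_of_mem hi)),
        ih fun i hi => h i (Finset.mem_insert_of_mem hi)]

variable {π : L} (hπ : v π = 1)
include hπ

lemma ac_ne_zero {y : L} (hy : y ≠ 0) : ac v π res y ≠ 0 := by
  rw [ac, Ne, hres.eq_zero_iff _ (le_of_eq (v_unit_part' hv hπ hy).symm),
    v_unit_part' hv hπ hy]
  simp

lemma ac_mul {y z : L} (hy : y ≠ 0) (hz : z ≠ 0) :
    ac v π res (y * z) = ac v π res y * ac v π res z := by
  have hπ0 : π ≠ 0 := by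
    intro h; rw [h, hv.map_zero] at hπ; exact absurd hπ (by simp)
  rw [ac, ac, ac, ← hres.map_mul _ _ (le_of_eq (v_unit_part' hv hπ hy).symm)
    (le_of_eq (v_unit_part' hv hπ hz).symm)]
  congr 1
  rw [vz_mul hv hy hz, neg_add, zpow_add₀ hπ0]
  ring

lemma ac_pow {y : L} (hy : y ≠ 0) (n : ℕ) :
    ac v π res (y ^ n) = ac v π res y ^ n := by
  induction n with
  | zero => simp [ac, vz, v_one hv, hres.map_one]
  | succ n ih => rw [pow_succ, pow_succ, ac_mul hv hres hπ (pow_ne_zero n hy) hy, ih]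

end res
end helpers

open scoped Classical in
lemma mem_Jset_iff {v : L → WithTop ℤ} (q r₀ r : ℕ) (a : ℕ → L) (β : ℤ) (i : ℕ) :
    i ∈ Jset q v r₀ r a ((β : ℤ) : ℚ) ↔ (i ∈ (Finset.Icc r₀ r).filter (fun j => a j ≠ 0) ∧
      ∀ j ∈ (Finset.Icc r₀ r).filter (fun j => a j ≠ 0),
        vz v (a i) + (q : ℤ) ^ i * β ≤ vz v (a j) + (q : ℤ) ^ j * β) := by
  constructor
  · rintro ⟨h1, h2, h3, h4⟩
    refine ⟨Finset.mem_filter.mpr ⟨Finset.mem_Icc.mpr ⟨h1, h2⟩, h3⟩, ?_⟩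
    intro j hj
    rw [Finset.mem_filter, Finset.mem_Icc] at hj
    have := h4 j hj.1.1 hj.1.2 hj.2
    exact_mod_cast this
  · rintro ⟨hi, h⟩
    rw [Finset.mem_filter, Finset.mem_Icc] at hi
    refine ⟨hi.1.1, hi.1.2, hi.2, ?_⟩
    intro j hj1 hj2 hj3
    have := h j (Finset.mem_filter.mpr ⟨Finset.mem_Icc.mpr ⟨hj1, hj2⟩, hj3⟩)
    exact_mod_cast this

open scoped Classical in
lemma keyLemma {v : L → WithTop ℤ} (hv : IsDVal v) {π : L} (hπ : v π = 1)
    {res : L → k} (hres : IsResidue v res)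
    (q r₀ r : ℕ) (hq2 : 2 ≤ q) (a : ℕ → L)
    {x : L} (hx : x ≠ 0)
    (hne : ((Finset.Icc r₀ r).filter (fun j => a j ≠ 0)).Nonempty)
    (hexc : ¬ Exc q v π res r₀ r a x) :
    v (phiMap q r₀ r a x) =
        ((((Finset.Icc r₀ r).filter (fun j => a j ≠ 0)).inf' hne
          (fun i => vz v (a i) + (q : ℤ) ^ i * vz v x) : ℤ) : WithTop ℤ) ∧
      ac v π res (phiMap q r₀ r a x) =
        ∑ i ∈ Finset.Icc r₀ r,
          (if i ∈ Jset q v r₀ r a ((vz v x : ℤ) : ℚ)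
            then ac v π res (a i) * ac v π res x ^ q ^ i else 0) := by
  have hπ0 : π ≠ 0 := by
    intro h; rw [h, hv.map_zero] at hπ; exact absurd hπ (by simp)
  set β := vz v x with hβ
  set I := (Finset.Icc r₀ r).filter (fun j => a j ≠ 0) with hI
  set g : ℕ → ℤ := fun i => vz v (a i) + (q : ℤ) ^ i * β with hg
  set m := I.inf' hne g with hm
  -- membership in Jset iff in I and g i = m
  have hJ : ∀ i : ℕ, i ∈ Jset q v r₀ r a ((β : ℤ) : ℚ) ↔ (i ∈ I ∧ g i = m) := by
    intro i
    rw [mem_Jset_iff]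
    constructor
    · rintro ⟨hi, h⟩
      exact ⟨hi, le_antisymm (Finset.le_inf' hne g h) (Finset.inf'_le g hi)⟩
    · rintro ⟨hi, h⟩
      exact ⟨hi, fun j hj => by show g i ≤ g j; rw [h]; exact Finset.inf'_le g hj⟩
  -- valuation of each term
  have hterm_v : ∀ i ∈ Finset.Icc r₀ r, a i ≠ 0 →
      v (a i * x ^ q ^ i) = ((g i : ℤ) : WithTop ℤ) := by
    intro i hi hai
    rw [hv.map_mul, vz_spec hv hai, vz_spec hv (pow_ne_zero _ hx),
      vz_pow hv hx, ← WithTop.coe_add]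
    congr 1
  have hterm_ge : ∀ i ∈ Finset.Icc r₀ r, (m : WithTop ℤ) ≤ v (a i * x ^ q ^ i) := by
    intro i hi
    by_cases hai : a i = 0
    · simp [hai, hv.map_zero]
    · rw [hterm_v i hi hai]
      exact_mod_cast Finset.inf'_le g (Finset.mem_filter.mpr ⟨hi, hai⟩)
  have hφv : (m : WithTop ℤ) ≤ v (phiMap q r₀ r a x) :=
    v_sum_ge hv _ _ _ hterm_ge
  have hterm_ge0 : ∀ i ∈ Finset.Icc r₀ r, 0 ≤ v (a i * x ^ q ^ i * π ^ (-m)) := by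
    intro i hi
    rw [hv.map_mul, v_zpow hv hπ]
    calc (0 : WithTop ℤ) = ((m : ℤ) : WithTop ℤ) + ((-m : ℤ) : WithTop ℤ) := by
          rw [← WithTop.coe_add]; simp
      _ ≤ v (a i * x ^ q ^ i) + ((-m : ℤ) : WithTop ℤ) :=
          add_le_add_left (hterm_ge i hi) _
  -- residues of the terms
  have hres_term : ∀ i ∈ Finset.Icc r₀ r, res (a i * x ^ q ^ i * π ^ (-m)) =
      (if i ∈ Jset q v r₀ r a ((β : ℤ) : ℚ)
        then ac v π res (a i) * ac v π res x ^ q ^ i else 0) := by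
    intro i hi
    by_cases hai : a i = 0
    · rw [if_neg (fun hmem => (Finset.mem_filter.mp ((hJ i).mp hmem).1).2 hai)]
      simp [hai, res_zero hv hres]
    · by_cases hgi : g i = m
      · rw [if_pos ((hJ i).mpr ⟨Finset.mem_filter.mpr ⟨hi, hai⟩, hgi⟩)]
        have hsplit : a i * x ^ q ^ i * π ^ (-m) =
            (a i * π ^ (-(vz v (a i)))) * (x ^ q ^ i * π ^ (-(vz v (x ^ q ^ i)))) := by
          rw [vz_pow hv hx, ← hβ]
          have hmeq : -m = (-(vz v (a i))) + (-((q ^ i : ℕ) * β)) := by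
            rw [← hgi]; simp [hg]; push_cast; ring
          rw [hmeq, zpow_add₀ hπ0]
          ring
        rw [hsplit, hres.map_mul _ _ (le_of_eq (v_unit_part' hv hπ hai).symm)
            (le_of_eq (v_unit_part' hv hπ (pow_ne_zero _ hx)).symm)]
        rw [← ac_pow hv hres hπ hx (q ^ i)]
        rfl
      · rw [if_neg (by rw [hJ]; rintro ⟨-, h⟩; exact hgi h)]
        rw [hres.eq_zero_iff _ (hterm_ge0 i hi), hv.map_mul, v_zpow hv hπ,
          hterm_v i hi hai, ← WithTop.coe_add]
        have : m < g i := lt_of_le_of_ne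
          (Finset.inf'_le g (Finset.mem_filter.mpr ⟨hi, hai⟩)) (Ne.symm hgi)
        exact_mod_cast by omega
  -- residue of the sum
  have hsum : res (phiMap q r₀ r a x * π ^ (-m)) =
      ∑ i ∈ Finset.Icc r₀ r,
        (if i ∈ Jset q v r₀ r a ((β : ℤ) : ℚ)
          then ac v π res (a i) * ac v π res x ^ q ^ i else 0) := by
    rw [phiMap, Finset.sum_mul, res_sum hv hres _ _ hterm_ge0]
    exact Finset.sum_congr rfl hres_term
  set S := ∑ i ∈ Finset.Icc r₀ r,
      (if i ∈ Jset q v r₀ r a ((β : ℤ) : ℚ)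
        then ac v π res (a i) * ac v π res x ^ q ^ i else 0) with hS
  by_cases hS0 : S = 0
  · -- exceptional case: contradiction
    exfalso
    apply hexc
    obtain ⟨i₀, hi₀I, hmi₀⟩ := Finset.exists_mem_eq_inf' hne g
    have hi₀J : i₀ ∈ Jset q v r₀ r a ((β : ℤ) : ℚ) := (hJ i₀).mpr ⟨hi₀I, hmi₀.symm⟩
    have hi₀Icc : i₀ ∈ Finset.Icc r₀ r := (Finset.mem_filter.mp hi₀I).1
    have hai₀ : a i₀ ≠ 0 := (Finset.mem_filter.mp hi₀I).2
    have ht₀ : ac v π res (a i₀) * ac v π res x ^ q ^ i₀ ≠ 0 :=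
      mul_ne_zero (ac_ne_zero hv hres hπ hai₀)
        (pow_ne_zero _ (ac_ne_zero hv hres hπ hx))
    have hj : ∃ j ∈ Finset.Icc r₀ r, j ≠ i₀ ∧
        (if j ∈ Jset q v r₀ r a ((β : ℤ) : ℚ)
          then ac v π res (a j) * ac v π res x ^ q ^ j else 0) ≠ 0 := by
      by_contra hcon
      push_neg at hcon
      rw [hS, Finset.sum_eq_single_of_mem i₀ hi₀Icc
        (fun j hj hji => hcon j hj hji), if_pos hi₀J] at hS0
      exact ht₀ hS0
    obtain ⟨j, hjIcc, hji, hjne⟩ := hj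
    have hjJ : j ∈ Jset q v r₀ r a ((β : ℤ) : ℚ) := by
      by_contra hc; rw [if_neg hc] at hjne; exact hjne rfl
    have hjI : j ∈ I ∧ g j = m := (hJ j).mp hjJ
    have haj : a j ≠ 0 := (Finset.mem_filter.mp hjI.1).2
    have hgeq : g i₀ = g j := by rw [hjI.2, ← hmi₀]
    -- produce Pset membership
    have hPmem : ∀ i' j' : ℕ, i' < j' → i' ∈ Finset.Icc r₀ r → j' ∈ Finset.Icc r₀ r →
        a i' ≠ 0 → a j' ≠ 0 → g i' = g j' → ((β : ℤ) : ℚ) ∈ Pset q v r₀ r a := by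
      intro i' j' hlt hi' hj' hai' haj' hgg
      right
      refine ⟨i', j', (Finset.mem_Icc.mp hi').1, hlt, (Finset.mem_Icc.mp hj').2,
        hai', haj', ?_⟩
      have hq1 : (1 : ℚ) < (q : ℚ) := by
        have h1q : 1 < q := hq2
        exact_mod_cast h1q
      have hqq : (q : ℚ) ^ j' - (q : ℚ) ^ i' ≠ 0 := by
        have := pow_lt_pow_right₀ hq1 hlt
        linarith
      rw [eq_div_iff hqq]
      have hQ : (vz v (a i') : ℚ) + (q : ℚ) ^ i' * (β : ℚ) =
          (vz v (a j') : ℚ) + (q : ℚ) ^ j' * (β : ℚ) := by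
        have hgg2 : vz v (a i') + (q : ℤ) ^ i' * β = vz v (a j') + (q : ℤ) ^ j' * β := hgg
        exact_mod_cast hgg2
      linear_combination -hQ
    have hβP : ((β : ℤ) : ℚ) ∈ Pset q v r₀ r a := by
      rcases lt_trichotomy i₀ j with h | h | h
      · exact hPmem i₀ j h hi₀Icc hjIcc hai₀ haj hgeq
      · exact absurd h.symm hji
      · exact hPmem j i₀ h hjIcc hi₀Icc haj hai₀ hgeq.symm
    refine ⟨hβP, Or.inr ⟨ac_ne_zero hv hres hπ hx, ?_⟩⟩
    exact hS0
  · -- generic case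
    have hv0 : v (phiMap q r₀ r a x * π ^ (-m)) = 0 := by
      have h1 : 0 ≤ v (phiMap q r₀ r a x * π ^ (-m)) := by
        rw [hv.map_mul, v_zpow hv hπ]
        calc (0 : WithTop ℤ) = ((m : ℤ) : WithTop ℤ) + ((-m : ℤ) : WithTop ℤ) := by
              rw [← WithTop.coe_add]; simp
          _ ≤ _ := add_le_add_left hφv _
      have h2 : ¬ (0 < v (phiMap q r₀ r a x * π ^ (-m))) := by
        rw [← hres.eq_zero_iff _ h1, hsum]
        exact hS0
      exact le_antisymm (not_lt.mp h2) h1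
    have hφeq : v (phiMap q r₀ r a x) = ((m : ℤ) : WithTop ℤ) := by
      have : phiMap q r₀ r a x = (phiMap q r₀ r a x * π ^ (-m)) * π ^ (m : ℤ) := by
        rw [mul_assoc, ← zpow_add₀ hπ0]
        simp
      rw [this, hv.map_mul, hv0, v_zpow hv hπ, zero_add]
    refine ⟨hφeq, ?_⟩
    have hvzφ : vz v (phiMap q r₀ r a x) = m := by
      rw [vz, hφeq]; rfl
    rw [ac, hvzφ, hsum]


/-- Lemma 2.10: given the valuation `α₁` and the angular component `γ₁` of `φ(x)`, the
angular component of a non-exceptional `x` lies in a set of at most `q^r` elements. -/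
theorem statement6
    (p q : ℕ) (hp : p.Prime) (hq : ∃ s : ℕ, 0 < s ∧ q = p ^ s)
    [CharP L p] (F : Subfield L) (hF : Nat.card F = q)
    (v : L → WithTop ℤ) (hv : IsDVal v)
    (π : L) (hπ : v π = 1) (res : L → k) (hres : IsResidue v res)
    (r₀ r : ℕ) (hr1 : 1 ≤ r) (hr₀r : r₀ ≤ r)
    (a : ℕ → L) (har₀ : a r₀ ≠ 0) (har : a r = 1)
    (α₁ : ℤ) (γ₁ : k) :
    ∃ T : Finset k, T.card ≤ q ^ r ∧
      ∀ x : L, x ≠ 0 → ¬ Exc q v π res r₀ r a x →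
        v (phiMap q r₀ r a x) = (α₁ : WithTop ℤ) →
        ac v π res (phiMap q r₀ r a x) = γ₁ →
        ac v π res x ∈ T := by
  classical
  have hq2 : 2 ≤ q := by
    obtain ⟨s, hs, rfl⟩ := hq
    calc 2 ≤ p := hp.two_le
      _ ≤ p ^ s := Nat.le_self_pow (by omega) p
  set I := (Finset.Icc r₀ r).filter (fun j => a j ≠ 0) with hI
  have hrI : r ∈ I := Finset.mem_filter.mpr
    ⟨Finset.mem_Icc.mpr ⟨hr₀r, le_refl r⟩, by rw [har]; exact one_ne_zero⟩
  have hne : I.Nonempty := ⟨r, hrI⟩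
  set g : ℤ → ℕ → ℤ := fun β i => vz v (a i) + (q : ℤ) ^ i * β with hg
  set m : ℤ → ℤ := fun β => I.inf' hne (g β) with hm
  have hmono : StrictMono m := by
    intro β β' hlt
    obtain ⟨j, hjI, hj⟩ := Finset.exists_mem_eq_inf' hne (g β')
    calc m β ≤ g β j := Finset.inf'_le _ hjI
      _ < g β' j := by
          have hqpos : (0 : ℤ) < (q : ℤ) ^ j :=
            pow_pos (by exact_mod_cast (by omega : 0 < q)) j
          show vz v (a j) + (q : ℤ) ^ j * β < vz v (a j) + (q : ℤ) ^ j * β'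
          nlinarith
      _ = m β' := hj.symm
  by_cases hβex : ∃ β : ℤ, m β = α₁
  · obtain ⟨β₀, hβ₀⟩ := hβex
    obtain ⟨i₀, hi₀I, hmi₀⟩ := Finset.exists_mem_eq_inf' hne (g β₀)
    set c : ℕ → k := fun i =>
      if i ∈ Jset q v r₀ r a ((β₀ : ℤ) : ℚ) then ac v π res (a i) else 0 with hc
    set f : Polynomial k :=
      (∑ i ∈ Finset.Icc r₀ r, Polynomial.C (c i) * Polynomial.X ^ (q ^ i)) -
        Polynomial.C γ₁ with hf
    have hi₀J : i₀ ∈ Jset q v r₀ r a ((β₀ : ℤ) : ℚ) := by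
      rw [mem_Jset_iff]
      exact ⟨hi₀I, fun j hj => by
        show g β₀ i₀ ≤ g β₀ j
        rw [← hmi₀]; exact Finset.inf'_le _ hj⟩
    have hi₀Icc : i₀ ∈ Finset.Icc r₀ r := (Finset.mem_filter.mp hi₀I).1
    have hai₀ : a i₀ ≠ 0 := (Finset.mem_filter.mp hi₀I).2
    have hqpow0 : q ^ i₀ ≠ 0 := pow_ne_zero _ (by omega)
    have hcoeff : f.coeff (q ^ i₀) = ac v π res (a i₀) := by
      rw [hf, Polynomial.coeff_sub, Polynomial.coeff_C, if_neg hqpow0, sub_zero,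
        Polynomial.finset_sum_coeff,
        Finset.sum_eq_single_of_mem i₀ hi₀Icc (fun j hj hji => by
          rw [Polynomial.coeff_C_mul, Polynomial.coeff_X_pow,
            if_neg (fun hcon => hji (Nat.pow_right_injective hq2 hcon).symm), mul_zero]),
        Polynomial.coeff_C_mul, Polynomial.coeff_X_pow, if_pos rfl, mul_one]
      simp only [hc]
      rw [if_pos hi₀J]
    have hf0 : f ≠ 0 := by
      intro h
      rw [h, Polynomial.coeff_zero] at hcoeff
      exact ac_ne_zero hv hres hπ hai₀ hcoeff.symm
    refine ⟨f.roots.toFinset, ?_, ?_⟩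
    · calc f.roots.toFinset.card ≤ Multiset.card f.roots := Multiset.toFinset_card_le _
        _ ≤ f.natDegree := Polynomial.card_roots' f
        _ ≤ q ^ r := by
            rw [hf]
            refine le_trans (Polynomial.natDegree_sub_le _ _) (max_le ?_ ?_)
            · refine le_trans (Polynomial.natDegree_sum_le _ _) ?_
              rw [Finset.fold_max_le]
              refine ⟨by omega, fun i hi => ?_⟩
              refine le_trans (Polynomial.natDegree_C_mul_le _ _) ?_
              rw [Polynomial.natDegree_X_pow]
              exact Nat.pow_le_pow_right (by omega) (Finset.mem_Icc.mp hi).2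
            · simp
    · intro x hx hexc hval hacx
      have hkey := keyLemma hv hπ hres q r₀ r hq2 a hx hne hexc
      have hβα : m (vz v x) = α₁ := by
        have h1 := hkey.1
        rw [hval] at h1
        have h1' : ((m (vz v x) : ℤ) : WithTop ℤ) = ((α₁ : ℤ) : WithTop ℤ) := h1.symm
        exact_mod_cast h1'
      have hβeq : vz v x = β₀ := hmono.injective (by rw [hβα, hβ₀])
      have hsum : ∑ i ∈ Finset.Icc r₀ r, c i * ac v π res x ^ q ^ i = γ₁ := by
        have h2 := hkey.2
        rw [hacx, hβeq] at h2
        rw [h2]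
        refine Finset.sum_congr rfl fun i hi => ?_
        simp only [hc]
        split <;> simp
      have hroot : f.eval (ac v π res x) = 0 := by
        rw [hf, Polynomial.eval_sub, Polynomial.eval_C, Polynomial.eval_finset_sum]
        simp only [Polynomial.eval_mul, Polynomial.eval_C, Polynomial.eval_pow,
          Polynomial.eval_X]
        rw [hsum, sub_self]
      rw [Multiset.mem_toFinset, Polynomial.mem_roots hf0]
      exact hroot
  · refine ⟨∅, by simp, ?_⟩
    intro x hx hexc hval hacx
    exfalso
    have hkey := keyLemma hv hπ hres q r₀ r hq2 a hx hne hexc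
    apply hβex
    refine ⟨vz v x, ?_⟩
    have h1 := hkey.1
    rw [hval] at h1
    have h1' : ((m (vz v x) : ℤ) : WithTop ℤ) = ((α₁ : ℤ) : WithTop ℤ) := h1.symm
    exact_mod_cast h1'


end Drinfeld
end

section
/- Let n >= 1 and let x, x' be nonzero elements of L such that for every k with 0 <= k <= n-1 one has phi^k(x) != 0, phi^k(x') != 0, and both Exc(phi^k(x)) and Exc(phi^k(x')) fail. If v(phi^n(x)) = v(phi^n(x')) (equality in Z union {+infinity}), then v(phi^k(x)) = v(phi^k(x')) for every 0 <= k <= n; in particular v(x) = v(x'). (The valuation-uniqueness part of Lemma 2.13 of the paper: v(x) is uniquely determined by v(phi^n(x)) when no intermediate iterate is exceptional.) -/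
open Filter Topology Finset

universe u

section Drinfeld

variable {L : Type u} [Field L] {k : Type*} [Field k]

open scoped Classical

namespace DrinfeldAux

variable {L : Type u} [Field L] {k : Type*} [Field k]
variable {v : L → WithTop ℤ} {π : L} {res : L → k}

lemma v_one (hv : IsDVal v) : v 1 = 0 := by
  have h := hv.map_mul 1 1
  rw [one_mul] at h
  lift v 1 to ℤ using hv.ne_top 1 one_ne_zero with n hn
  have hnn : n = n + n := by exact_mod_cast h
  have : n = 0 := by omega
  rw [this]; rfl

lemma vz_coe (hv : IsDVal v) {y : L} (hy : y ≠ 0) : (vz v y : WithTop ℤ) = v y := by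
  lift v y to ℤ using hv.ne_top y hy with n hn
  simp [vz, ← hn]

lemma ne_zero_of_v_eq (hv : IsDVal v) {y : L} {m : ℤ} (h : v y = (m : WithTop ℤ)) : y ≠ 0 := by
  intro h0; rw [h0, hv.map_zero] at h; exact (WithTop.top_ne_coe) h

lemma vz_mul (hv : IsDVal v) {x y : L} (hx : x ≠ 0) (hy : y ≠ 0) :
    vz v (x * y) = vz v x + vz v y := by
  have h : v (x * y) = ((vz v x + vz v y : ℤ) : WithTop ℤ) := by
    rw [hv.map_mul, ← vz_coe hv hx, ← vz_coe hv hy]; push_cast; ring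
  have := vz_coe hv (mul_ne_zero hx hy)
  rw [h] at this; exact_mod_cast this

lemma vz_pow (hv : IsDVal v) {x : L} (hx : x ≠ 0) (n : ℕ) :
    vz v (x ^ n) = n * vz v x := by
  induction n with
  | zero => simp [vz, v_one hv]
  | succ n ih =>
      rw [pow_succ, vz_mul hv (pow_ne_zero n hx) hx, ih]; push_cast; ring

lemma vz_inv (hv : IsDVal v) {x : L} (hx : x ≠ 0) : vz v x⁻¹ = - vz v x := by
  have h := vz_mul hv hx (inv_ne_zero hx)
  rw [mul_inv_cancel₀ hx] at h
  have h1 : vz v (1 : L) = 0 := by simp [vz, v_one hv]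
  omega

lemma vz_zpow (hv : IsDVal v) {x : L} (hx : x ≠ 0) (z : ℤ) :
    vz v (x ^ z) = z * vz v x := by
  cases z with
  | ofNat n => rw [Int.ofNat_eq_coe, zpow_natCast, vz_pow hv hx]
  | negSucc n =>
      rw [zpow_negSucc, vz_inv hv (pow_ne_zero _ hx), vz_pow hv hx, Int.negSucc_eq]
      push_cast; ring

lemma v_eq_vz (hv : IsDVal v) {y : L} (hy : y ≠ 0) : v y = ((vz v y : ℤ) : WithTop ℤ) :=
  (vz_coe hv hy).symm

lemma res_zero (hv : IsDVal v) (hres : IsResidue v res) : res (0 : L) = 0 := by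
  refine (hres.eq_zero_iff 0 ?_).mpr ?_ <;> simp [hv.map_zero]

lemma res_sum (hv : IsDVal v) (hres : IsResidue v res) {ι : Type*} (s : Finset ι) (f : ι → L)
    (h : ∀ i ∈ s, 0 ≤ v (f i)) :
    0 ≤ v (∑ i ∈ s, f i) ∧ res (∑ i ∈ s, f i) = ∑ i ∈ s, res (f i) := by
  induction s using Finset.induction with
  | empty => simp [hv.map_zero, res_zero hv hres]
  | insert b s' hni ih =>
      have hb := h b (Finset.mem_insert_self b s')
      have hs' := ih (fun i hi => h i (Finset.mem_insert_of_mem hi))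
      rw [Finset.sum_insert hni, Finset.sum_insert hni]
      constructor
      · exact le_trans (le_min hb hs'.1) (hv.add_min _ _)
      · rw [hres.map_add _ _ hb hs'.1, hs'.2]

lemma v_pow_nonneg (hv : IsDVal v) {x : L} (hx : 0 ≤ v x) (n : ℕ) : 0 ≤ v (x ^ n) := by
  induction n with
  | zero => simp [v_one hv]
  | succ n ih =>
      rw [pow_succ, hv.map_mul]
      exact add_nonneg ih hx

lemma res_pow (hv : IsDVal v) (hres : IsResidue v res) {x : L} (hx : 0 ≤ v x) (n : ℕ) :
    res (x ^ n) = res x ^ n := by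
  induction n with
  | zero => simpa using hres.map_one
  | succ n ih => rw [pow_succ, hres.map_mul _ _ (v_pow_nonneg hv hx n) hx, ih, pow_succ]

lemma pi_ne_zero (hv : IsDVal v) (hπ : v π = 1) : π ≠ 0 :=
  ne_zero_of_v_eq hv (by exact_mod_cast hπ)

lemma vz_pi (hv : IsDVal v) (hπ : v π = 1) : vz v π = 1 := by
  have := vz_coe hv (pi_ne_zero hv hπ)
  rw [hπ] at this; exact_mod_cast this

lemma v_unit (hv : IsDVal v) (hπ : v π = 1) {y : L} (hy : y ≠ 0) :
    v (y * π ^ (-(vz v y))) = 0 := by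
  have hπ0 := pi_ne_zero hv hπ
  have h0 : (y * π ^ (-(vz v y))) ≠ 0 := mul_ne_zero hy (zpow_ne_zero _ hπ0)
  rw [v_eq_vz hv h0, vz_mul hv hy (zpow_ne_zero _ hπ0), vz_zpow hv hπ0, vz_pi hv hπ]
  norm_num

lemma ac_ne_zero (hv : IsDVal v) (hπ : v π = 1) (hres : IsResidue v res) {y : L} (hy : y ≠ 0) :
    ac v π res y ≠ 0 := by
  intro h
  have h0 := v_unit hv hπ hy
  have := (hres.eq_zero_iff _ (le_of_eq h0.symm)).mp h
  rw [h0] at this; exact lt_irrefl _ this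

end DrinfeldAux
namespace DrinfeldAux

variable {L : Type u} [Field L] {k : Type*} [Field k]
variable {v : L → WithTop ℤ} {π : L} {res : L → k}

/-- Indices with nonzero coefficient. -/
noncomputable def Sfin (r₀ r : ℕ) (a : ℕ → L) : Finset ℕ :=
  (Finset.Icc r₀ r).filter fun i => a i ≠ 0

lemma Sfin_ne {r₀ r : ℕ} {a : ℕ → L} (hr₀r : r₀ ≤ r) (har : a r = 1) :
    (Sfin r₀ r a).Nonempty :=
  ⟨r, by simp [Sfin, hr₀r, har]⟩

/-- The "Newton polygon" functions. -/
noncomputable def gfun (q : ℕ) (v : L → WithTop ℤ) (a : ℕ → L) (m : ℤ) (i : ℕ) : ℤ :=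
  vz v (a i) + (q : ℤ) ^ i * m

/-- The minimum of the Newton functions. -/
noncomputable def Mval (q : ℕ) (v : L → WithTop ℤ) {r₀ r : ℕ} {a : ℕ → L}
    (hne : (Sfin r₀ r a).Nonempty) (m : ℤ) : ℤ :=
  (Sfin r₀ r a).inf' hne (gfun q v a m)

lemma Mval_strictMono (q : ℕ) (v : L → WithTop ℤ) {r₀ r : ℕ} {a : ℕ → L}
    (hne : (Sfin r₀ r a).Nonempty) (hq : 1 ≤ q) {m m' : ℤ} (hm : m < m') :
    Mval q v hne m < Mval q v hne m' := by
  obtain ⟨i0, hi0, hgi0⟩ := Finset.exists_mem_eq_inf' hne (gfun q v a m')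
  calc Mval q v hne m ≤ gfun q v a m i0 := Finset.inf'_le _ hi0
    _ < gfun q v a m' i0 := by
        unfold gfun
        have hp : (0:ℤ) < (q:ℤ) ^ i0 := pow_pos (by exact_mod_cast hq) i0
        nlinarith
    _ = Mval q v hne m' := hgi0.symm

lemma gfun_cast (q : ℕ) (v : L → WithTop ℤ) (a : ℕ → L) (m : ℤ) (i : ℕ) :
    ((gfun q v a m i : ℤ) : ℚ) = (vz v (a i) : ℚ) + (q : ℚ) ^ i * ((m : ℤ) : ℚ) := by
  push_cast [gfun]; ring

lemma mem_Jset_iff (q : ℕ) {r₀ r : ℕ} {a : ℕ → L}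
    (hne : (Sfin r₀ r a).Nonempty) (m : ℤ) (i : ℕ) :
    i ∈ Jset q v r₀ r a ((m : ℤ) : ℚ) ↔ i ∈ Sfin r₀ r a ∧ gfun q v a m i = Mval q v hne m := by
  constructor
  · rintro ⟨h1, h2, h3, h4⟩
    have hiS : i ∈ Sfin r₀ r a := by simp [Sfin, h1, h2, h3]
    refine ⟨hiS, le_antisymm ?_ (Finset.inf'_le _ hiS)⟩
    apply Finset.le_inf'
    intro j hj
    simp only [Sfin, Finset.mem_filter, Finset.mem_Icc] at hj
    have := h4 j hj.1.1 hj.1.2 hj.2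
    rw [← gfun_cast q v a m i, ← gfun_cast q v a m j] at this
    exact_mod_cast this
  · rintro ⟨hiS, hgi⟩
    have hiS' := hiS
    simp only [Sfin, Finset.mem_filter, Finset.mem_Icc] at hiS'
    refine ⟨hiS'.1.1, hiS'.1.2, hiS'.2, fun j hj1 hj2 hj3 => ?_⟩
    have hjS : j ∈ Sfin r₀ r a := by simp [Sfin, hj1, hj2, hj3]
    have : gfun q v a m i ≤ gfun q v a m j := hgi ▸ Finset.inf'_le _ hjS
    rw [← gfun_cast q v a m i, ← gfun_cast q v a m j]
    exact_mod_cast this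

lemma Jset_unique (q : ℕ) {r₀ r : ℕ} {a : ℕ → L} (hq2 : 2 ≤ q) {m : ℤ}
    (hP : ((m : ℤ) : ℚ) ∉ Pset q v r₀ r a)
    {i j : ℕ} (hi : i ∈ Jset q v r₀ r a ((m : ℤ) : ℚ)) (hj : j ∈ Jset q v r₀ r a ((m : ℤ) : ℚ)) :
    i = j := by
  -- both give mutual inequalities, hence equality of Newton functions
  obtain ⟨hi1, hi2, hi3, hi4⟩ := hi
  obtain ⟨hj1, hj2, hj3, hj4⟩ := hj
  by_contra hne
  -- wlog i < j
  have key : ∀ i' j' : ℕ, r₀ ≤ i' → i' ≤ r → a i' ≠ 0 → r₀ ≤ j' → j' ≤ r → a j' ≠ 0 → i' < j' →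
      (vz v (a i') : ℚ) + (q:ℚ) ^ i' * ((m : ℤ) : ℚ) = (vz v (a j') : ℚ) + (q:ℚ) ^ j' * ((m : ℤ) : ℚ) →
      False := by
    intro i' j' h1 h2 h3 h4 h5 h6 hlt heq
    apply hP
    right
    refine ⟨i', j', h1, hlt, h5, h3, h6, ?_⟩
    have hqq : (1:ℚ) < (q:ℚ) := by exact_mod_cast hq2
    have hne' : (q:ℚ) ^ j' - (q:ℚ) ^ i' ≠ 0 := by
      have := pow_lt_pow_right₀ hqq hlt
      linarith
    field_simp
    linarith [heq]
  rcases lt_or_gt_of_ne hne with hlt | hlt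
  · exact key i j hi1 hi2 hi3 hj1 hj2 hj3 hlt (le_antisymm (hi4 j hj1 hj2 hj3) (hj4 i hi1 hi2 hi3))
  · exact key j i hj1 hj2 hj3 hi1 hi2 hi3 hlt (le_antisymm (hj4 i hi1 hi2 hi3) (hi4 j hj1 hj2 hj3))

end DrinfeldAux
namespace DrinfeldAux

variable {L : Type u} [Field L] {k : Type*} [Field k]
variable {v : L → WithTop ℤ} {π : L} {res : L → k}

lemma resid (hv : IsDVal v) (hπ : v π = 1) (hres : IsResidue v res)
    {q r₀ r : ℕ} {a : ℕ → L} (hne : (Sfin r₀ r a).Nonempty)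
    {y : L} (hy : y ≠ 0) :
    0 ≤ v (phiMap q r₀ r a y * π ^ (-(Mval q v hne (vz v y)))) ∧
    res (phiMap q r₀ r a y * π ^ (-(Mval q v hne (vz v y)))) =
      ∑ i ∈ Finset.Icc r₀ r,
        (if i ∈ Jset q v r₀ r a ((vz v y : ℤ) : ℚ) then
          ac v π res (a i) * ac v π res y ^ q ^ i else 0) := by
  have hπ0 := pi_ne_zero hv hπ
  set m := vz v y with hm
  set M := Mval q v hne m with hM
  have hexp : phiMap q r₀ r a y * π ^ (-M) =
      ∑ i ∈ Finset.Icc r₀ r, (a i * y ^ q ^ i * π ^ (-M)) := by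
    rw [phiMap, Finset.sum_mul]
  -- valuation of each nonzero term
  have htne : ∀ i : ℕ, a i ≠ 0 → a i * y ^ q ^ i * π ^ (-M) ≠ 0 := fun i hai =>
    mul_ne_zero (mul_ne_zero hai (pow_ne_zero _ hy)) (zpow_ne_zero _ hπ0)
  have hterm_vz : ∀ i : ℕ, a i ≠ 0 →
      vz v (a i * y ^ q ^ i * π ^ (-M)) = gfun q v a m i - M := by
    intro i hai
    rw [vz_mul hv (mul_ne_zero hai (pow_ne_zero _ hy)) (zpow_ne_zero _ hπ0),
      vz_mul hv hai (pow_ne_zero _ hy), vz_pow hv hy, vz_zpow hv hπ0, vz_pi hv hπ]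
    rw [gfun]
    push_cast
    ring
  have hv_nonneg : ∀ i ∈ Finset.Icc r₀ r, 0 ≤ v (a i * y ^ q ^ i * π ^ (-M)) := by
    intro i hi
    by_cases hai : a i = 0
    · simp [hai, hv.map_zero]
    · have hiS : i ∈ Sfin r₀ r a := by
        simp only [Sfin, Finset.mem_filter]; exact ⟨hi, hai⟩
      have hle : M ≤ gfun q v a m i := Finset.inf'_le _ hiS
      rw [v_eq_vz hv (htne i hai), hterm_vz i hai]
      exact_mod_cast sub_nonneg.mpr hle
  obtain ⟨h1, h2⟩ := res_sum hv hres (Finset.Icc r₀ r) _ hv_nonneg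
  refine ⟨by rw [hexp]; exact h1, ?_⟩
  rw [hexp, h2]
  apply Finset.sum_congr rfl
  intro i hi
  by_cases hai : a i = 0
  · have hnJ : i ∉ Jset q v r₀ r a ((m : ℤ) : ℚ) := fun h => h.2.2.1 hai
    rw [if_neg hnJ, hai]
    simp [res_zero hv hres]
  · have hiS : i ∈ Sfin r₀ r a := by
      simp only [Sfin, Finset.mem_filter]; exact ⟨hi, hai⟩
    by_cases hgi : gfun q v a m i = M
    · rw [if_pos ((mem_Jset_iff q hne m i).mpr ⟨hiS, hgi⟩)]
      -- factor the term into two unit parts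
      have e1 : π ^ (-M) = π ^ (-(vz v (a i))) * π ^ ((-m) * ((q : ℤ) ^ i)) := by
        rw [← zpow_add₀ hπ0]
        congr 1
        rw [gfun] at hgi
        linarith
      have e2 : (y * π ^ (-m)) ^ (q ^ i) = y ^ q ^ i * π ^ ((-m) * ((q : ℤ) ^ i)) := by
        rw [mul_pow, ← zpow_natCast (π ^ (-m)) (q ^ i), ← zpow_mul]
        congr 2
      have key : a i * y ^ q ^ i * π ^ (-M) =
          (a i * π ^ (-(vz v (a i)))) * ((y * π ^ (-m)) ^ (q ^ i)) := by
        rw [e1, e2]; ring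
      have hu1 : v (a i * π ^ (-(vz v (a i)))) = 0 := v_unit hv hπ hai
      have hu2 : v (y * π ^ (-m)) = 0 := v_unit hv hπ hy
      rw [key, hres.map_mul _ _ (le_of_eq hu1.symm)
        (v_pow_nonneg hv (le_of_eq hu2.symm) _),
        res_pow hv hres (le_of_eq hu2.symm)]
      rfl
    · have hle : M ≤ gfun q v a m i := Finset.inf'_le _ hiS
      have hnJ : i ∉ Jset q v r₀ r a ((m : ℤ) : ℚ) := fun h =>
        hgi (((mem_Jset_iff q hne m i).mp h).2)
      rw [if_neg hnJ]
      apply (hres.eq_zero_iff _ (hv_nonneg i hi)).mpr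
      rw [v_eq_vz hv (htne i hai), hterm_vz i hai]
      exact_mod_cast sub_pos.mpr (lt_of_le_of_ne hle (Ne.symm hgi))

end DrinfeldAux
namespace DrinfeldAux

variable {L : Type u} [Field L] {k : Type*} [Field k]
variable {v : L → WithTop ℤ} {π : L} {res : L → k}

lemma vPhi (hv : IsDVal v) (hπ : v π = 1) (hres : IsResidue v res)
    {q r₀ r : ℕ} {a : ℕ → L} (hq2 : 2 ≤ q) (hne : (Sfin r₀ r a).Nonempty)
    {y : L} (hy : y ≠ 0) (hexc : ¬ Exc q v π res r₀ r a y) :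
    v (phiMap q r₀ r a y) = ((Mval q v hne (vz v y) : ℤ) : WithTop ℤ) := by
  have hπ0 := pi_ne_zero hv hπ
  set m := vz v y with hm
  set M := Mval q v hne m with hM
  obtain ⟨hge, hre⟩ := resid hv hπ hres hne hy
  -- the residual sum is nonzero
  have hsum : (∑ i ∈ Finset.Icc r₀ r,
      (if i ∈ Jset q v r₀ r a ((m : ℤ) : ℚ) then
        ac v π res (a i) * ac v π res y ^ q ^ i else 0)) ≠ 0 := by
    by_cases hP : ((m : ℤ) : ℚ) ∈ Pset q v r₀ r a
    · have hR : ac v π res y ∉ Rset q v π res r₀ r a ((m : ℤ) : ℚ) := fun h => hexc ⟨hP, h⟩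
      intro h0
      exact hR (Or.inr ⟨ac_ne_zero hv hπ hres hy, h0⟩)
    · obtain ⟨i0, hi0S, hgi0⟩ := Finset.exists_mem_eq_inf' hne (gfun q v a m)
      have hi0J : i0 ∈ Jset q v r₀ r a ((m : ℤ) : ℚ) :=
        (mem_Jset_iff q hne m i0).mpr ⟨hi0S, hgi0.symm⟩
      have hi0Icc : i0 ∈ Finset.Icc r₀ r := (Finset.mem_filter.mp hi0S).1
      have hai0 : a i0 ≠ 0 := (Finset.mem_filter.mp hi0S).2
      rw [Finset.sum_eq_single_of_mem i0 hi0Icc ?_]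
      · rw [if_pos hi0J]
        exact mul_ne_zero (ac_ne_zero hv hπ hres hai0)
          (pow_ne_zero _ (ac_ne_zero hv hπ hres hy))
      · intro b _ hb
        rw [if_neg]
        intro hbJ
        exact hb (Jset_unique q hq2 hP hbJ hi0J)
  -- hence the normalized element has valuation 0
  have hvz : v (phiMap q r₀ r a y * π ^ (-M)) = 0 := by
    rcases lt_or_eq_of_le hge with h | h
    · exact absurd ((hres.eq_zero_iff _ hge).mpr h) (by rw [hre]; exact hsum)
    · exact h.symm
  have ht0 : phiMap q r₀ r a y * π ^ (-M) ≠ 0 :=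
    ne_zero_of_v_eq hv (m := 0) (by rw [hvz]; rfl)
  have hφ0 : phiMap q r₀ r a y ≠ 0 := fun h => ht0 (by rw [h, zero_mul])
  have : phiMap q r₀ r a y = (phiMap q r₀ r a y * π ^ (-M)) * π ^ M := by
    rw [mul_assoc, ← zpow_add₀ hπ0]
    norm_num
  rw [this, hv.map_mul, hvz, zero_add, v_eq_vz hv (zpow_ne_zero _ hπ0),
    vz_zpow hv hπ0, vz_pi hv hπ, mul_one]

lemma step (hv : IsDVal v) (hπ : v π = 1) (hres : IsResidue v res)
    {q r₀ r : ℕ} {a : ℕ → L} (hq2 : 2 ≤ q) (hne : (Sfin r₀ r a).Nonempty)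
    {y y' : L} (hy : y ≠ 0) (hy' : y' ≠ 0)
    (hexc : ¬ Exc q v π res r₀ r a y) (hexc' : ¬ Exc q v π res r₀ r a y')
    (h : v (phiMap q r₀ r a y) = v (phiMap q r₀ r a y')) : v y = v y' := by
  rw [vPhi hv hπ hres hq2 hne hy hexc, vPhi hv hπ hres hq2 hne hy' hexc'] at h
  have hMM : Mval q v hne (vz v y) = Mval q v hne (vz v y') := by exact_mod_cast h
  have hmm : vz v y = vz v y' := by
    by_contra hcon
    rcases lt_or_gt_of_ne hcon with hlt | hlt
    · exact absurd hMM (ne_of_lt (Mval_strictMono q v hne (by omega) hlt))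
    · exact absurd hMM.symm (ne_of_lt (Mval_strictMono q v hne (by omega) hlt))
  rw [v_eq_vz hv hy, v_eq_vz hv hy', hmm]

end DrinfeldAux
/-- The valuation-uniqueness part of Lemma 2.13: if no iterate `φᵏ(x)`, `φᵏ(x')` for
`k < n` is zero or exceptional and `v(φⁿ(x)) = v(φⁿ(x'))`, then `v(φᵏ(x)) = v(φᵏ(x'))`
for all `k ≤ n`; in particular `v(x) = v(x')`. -/
theorem statement9
    (p q : ℕ) (hp : p.Prime) (hq : ∃ s : ℕ, 0 < s ∧ q = p ^ s)
    [CharP L p] (F : Subfield L) (hF : Nat.card F = q)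
    (v : L → WithTop ℤ) (hv : IsDVal v)
    (π : L) (hπ : v π = 1) (res : L → k) (hres : IsResidue v res)
    (r₀ r : ℕ) (hr1 : 1 ≤ r) (hr₀r : r₀ ≤ r)
    (a : ℕ → L) (har₀ : a r₀ ≠ 0) (har : a r = 1)
    (n : ℕ) (hn : 1 ≤ n) (x x' : L) (hx : x ≠ 0) (hx' : x' ≠ 0)
    (hit : ∀ j : ℕ, j < n →
      (phiMap q r₀ r a)^[j] x ≠ 0 ∧ (phiMap q r₀ r a)^[j] x' ≠ 0 ∧
      ¬ Exc q v π res r₀ r a ((phiMap q r₀ r a)^[j] x) ∧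
      ¬ Exc q v π res r₀ r a ((phiMap q r₀ r a)^[j] x'))
    (heq : v ((phiMap q r₀ r a)^[n] x) = v ((phiMap q r₀ r a)^[n] x')) :
    ∀ j : ℕ, j ≤ n → v ((phiMap q r₀ r a)^[j] x) = v ((phiMap q r₀ r a)^[j] x') := by
  have hq2 : 2 ≤ q := by
    obtain ⟨s, hs, rfl⟩ := hq
    calc 2 ≤ p := hp.two_le
      _ ≤ p ^ s := Nat.le_self_pow hs.ne' p
  have hne : (DrinfeldAux.Sfin r₀ r a).Nonempty := DrinfeldAux.Sfin_ne hr₀r har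
  have main : ∀ d : ℕ, d ≤ n →
      v ((phiMap q r₀ r a)^[n - d] x) = v ((phiMap q r₀ r a)^[n - d] x') := by
    intro d
    induction d with
    | zero => intro _; simpa using heq
    | succ d ih =>
        intro hd
        have hd' := ih (by omega)
        have hj1 : n - d = (n - (d + 1)) + 1 := by omega
        rw [hj1, Function.iterate_succ_apply', Function.iterate_succ_apply'] at hd'
        obtain ⟨hx1, hx2, he1, he2⟩ := hit (n - (d + 1)) (by omega)
        exact DrinfeldAux.step hv hπ hres hq2 hne hx1 hx2 he1 he2 hd'
  intro j hj
  have h := main (n - j) (by omega)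
  rwa [show n - (n - j) = j by omega] at h

end Drinfeld
end

section
/- Example 3.4 of the paper (optimality of the exponent, failure of the naive local Lehmer bound): let q be a power of the prime p, let r >= 2 and m >= r be integers, and set d = q^m - 1. Let L be a field of characteristic p equipped with a normalized discrete valuation v, let t be a nonzero element of L with v(t) = d, and suppose alpha in L satisfies alpha^d = alpha + 1/t. Set x = t * alpha and let phi : L -> L be given by phi(y) = y^(q^r) - t^(1-q) * y^q (the Drinfeld module phi_t = tau^r - t^(1-q) tau). Then: v(alpha) = -1; v(phi^i(x)) = d - q^i for every 0 <= i <= m; v(phi^(m+1)(x)) = -q^(m+1) + q^m - 1; v(phi^(m+1+k)(x)) = q^(r*k) * (-q^(m+1) + q^m - 1) for every k >= 0; hence the sequence min(0, v(phi^n(x)))/q^(r*n) converges to V = (-q^(m+1) + q^m - 1)/q^(r(m+1)), and this limit satisfies 0 < -V < q^(1-r)/d^(r-1). -/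
open Filter Topology Finset

universe u

section Drinfeld

variable {L : Type u} [Field L] {k : Type*} [Field k]

namespace IsDVal

variable {v : L → WithTop ℤ}

lemma ne_zero_of_coe (hv : IsDVal v) {y : L} {a : ℤ} (h : v y = (a : WithTop ℤ)) : y ≠ 0 := by
  intro h0; rw [h0, hv.map_zero] at h; exact (WithTop.top_ne_coe) h

lemma map_one (hv : IsDVal v) : v 1 = (0 : WithTop ℤ) := by
  have h := hv.map_mul 1 1
  rw [one_mul] at h
  obtain ⟨a, ha⟩ := WithTop.ne_top_iff_exists.mp (hv.ne_top 1 one_ne_zero)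
  rw [← ha] at h ⊢
  have : a = a + a := by exact_mod_cast h
  have : a = 0 := by omega
  simp [this]

lemma map_neg (hv : IsDVal v) (y : L) : v (-y) = v y := by
  rcases eq_or_ne y 0 with rfl | hy
  · simp
  · have h1 : v (-1 : L) = 0 := by
      have h := hv.map_mul (-1) (-1)
      rw [neg_mul_neg, one_mul, hv.map_one] at h
      obtain ⟨a, ha⟩ := WithTop.ne_top_iff_exists.mp (hv.ne_top (-1) (by simp))
      rw [← ha] at h ⊢
      have : (0:ℤ) = a + a := by exact_mod_cast h
      have : a = 0 := by omega
      simp [this]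
    have := hv.map_mul (-1) y
    rw [neg_one_mul, h1, zero_add] at this
    exact this

lemma coe_mul (hv : IsDVal v) {y z : L} {a b : ℤ} (hy : v y = (a : WithTop ℤ)) (hz : v z = (b : WithTop ℤ)) :
    v (y * z) = ((a + b : ℤ) : WithTop ℤ) := by
  rw [hv.map_mul, hy, hz]; push_cast; rfl

lemma coe_pow (hv : IsDVal v) {y : L} {a : ℤ} (hy : v y = (a : WithTop ℤ)) (n : ℕ) :
    v (y ^ n) = (((n : ℤ) * a : ℤ) : WithTop ℤ) := by
  induction n with
  | zero => simpa using hv.map_one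
  | succ n ih =>
      rw [pow_succ, hv.coe_mul ih hy]
      congr 1
      push_cast; ring

lemma coe_inv (hv : IsDVal v) {y : L} {a : ℤ} (hy : v y = (a : WithTop ℤ)) :
    v y⁻¹ = ((-a : ℤ) : WithTop ℤ) := by
  have hy0 : y ≠ 0 := hv.ne_zero_of_coe hy
  have h := hv.map_mul y⁻¹ y
  rw [inv_mul_cancel₀ hy0, hv.map_one, hy] at h
  obtain ⟨b, hb⟩ := WithTop.ne_top_iff_exists.mp (hv.ne_top y⁻¹ (inv_ne_zero hy0))
  rw [← hb] at h ⊢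
  have : (0:ℤ) = b + a := by exact_mod_cast h
  have : b = -a := by omega
  simp [this]

lemma add_left (hv : IsDVal v) {y z : L} (h : v y < v z) : v (y + z) = v y := by
  have h1 : v y ≤ v (y + z) := by
    have := hv.add_min y z
    rwa [min_eq_left h.le] at this
  rcases h1.lt_or_eq with h2 | h2
  · exfalso
    have h3 : v y = v ((y + z) + -z) := by ring_nf
    have h4 := hv.add_min (y + z) (-z)
    rw [hv.map_neg, ← h3] at h4
    have := lt_min h2 h
    exact absurd h4 (not_le.mpr this)
  · exact h2.symm

lemma sub_right (hv : IsDVal v) {y z : L} (h : v z < v y) : v (y - z) = v z := by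
  have : y - z = -z + y := by ring
  rw [this, hv.add_left (by rwa [hv.map_neg]), hv.map_neg]

end IsDVal

namespace IsDVal
variable {v : L → WithTop ℤ}

lemma add_right (hv : IsDVal v) {y z : L} (h : v z < v y) : v (y + z) = v z := by
  rw [add_comm]; exact hv.add_left h

lemma sub_left (hv : IsDVal v) {y z : L} (h : v y < v z) : v (y - z) = v y := by
  rw [sub_eq_add_neg]; exact hv.add_left (by rwa [hv.map_neg])

end IsDVal


-- step lemma: valuation of φ(y) when the t-term dominates (is smaller)
lemma step_t {v : L → WithTop ℤ} (hv : IsDVal v) (q r : ℕ) (hq1 : 1 ≤ q)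
    (t : L) (D : ℤ) (hvt : v t = (D : WithTop ℤ)) (y : L) (c : ℤ) (hy : v y = (c : WithTop ℤ))
    (h : (1 - (q:ℤ)) * D + q * c < (q:ℤ) ^ r * c) :
    v (y ^ q ^ r - t ^ ((1:ℤ) - (q:ℤ)) * y ^ q)
      = (((1 - (q:ℤ)) * D + q * c : ℤ) : WithTop ℤ) := by
  have hA : v (y ^ q ^ r) = (((q:ℤ) ^ r * c : ℤ) : WithTop ℤ) := by
    rw [hv.coe_pow hy (q ^ r)]; push_cast; ring_nf
  have hexp : ((1:ℤ) - (q:ℤ)) = -(((q - 1 : ℕ) : ℤ)) := by omega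
  have ht' : v (t ^ ((1:ℤ) - (q:ℤ))) = ((-(((q-1:ℕ):ℤ) * D) : ℤ) : WithTop ℤ) := by
    rw [hexp, zpow_neg, zpow_natCast]
    exact hv.coe_inv (hv.coe_pow hvt (q - 1))
  have hB : v (t ^ ((1:ℤ) - (q:ℤ)) * y ^ q)
      = (((1 - (q:ℤ)) * D + q * c : ℤ) : WithTop ℤ) := by
    rw [hv.coe_mul ht' (hv.coe_pow hy q)]
    congr 1
    have hc : ((q - 1 : ℕ) : ℤ) = (q:ℤ) - 1 := by omega
    rw [hc]; ring
  rw [hv.sub_right (by rw [hA, hB]; exact_mod_cast h), hB]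

-- step lemma: valuation of φ(y) when the Frobenius term dominates
lemma step_y {v : L → WithTop ℤ} (hv : IsDVal v) (q r : ℕ) (hq1 : 1 ≤ q)
    (t : L) (D : ℤ) (hvt : v t = (D : WithTop ℤ)) (y : L) (c : ℤ) (hy : v y = (c : WithTop ℤ))
    (h : (q:ℤ) ^ r * c < (1 - (q:ℤ)) * D + q * c) :
    v (y ^ q ^ r - t ^ ((1:ℤ) - (q:ℤ)) * y ^ q)
      = (((q:ℤ) ^ r * c : ℤ) : WithTop ℤ) := by
  have hA : v (y ^ q ^ r) = (((q:ℤ) ^ r * c : ℤ) : WithTop ℤ) := by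
    rw [hv.coe_pow hy (q ^ r)]; push_cast; ring_nf
  have hexp : ((1:ℤ) - (q:ℤ)) = -(((q - 1 : ℕ) : ℤ)) := by omega
  have ht' : v (t ^ ((1:ℤ) - (q:ℤ))) = ((-(((q-1:ℕ):ℤ) * D) : ℤ) : WithTop ℤ) := by
    rw [hexp, zpow_neg, zpow_natCast]
    exact hv.coe_inv (hv.coe_pow hvt (q - 1))
  have hB : v (t ^ ((1:ℤ) - (q:ℤ)) * y ^ q)
      = (((1 - (q:ℤ)) * D + q * c : ℤ) : WithTop ℤ) := by
    rw [hv.coe_mul ht' (hv.coe_pow hy q)]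
    congr 1
    have hc : ((q - 1 : ℕ) : ℤ) = (q:ℤ) - 1 := by omega
    rw [hc]; ring
  rw [hv.sub_left (by rw [hA, hB]; exact_mod_cast h), hA]


set_option maxHeartbeats 1600000 in
/-- Example 3.4 (optimality of the exponent, failure of the naive local Lehmer bound):
for `d = q^m - 1`, `v(t) = d`, `α^d = α + 1/t`, `x = t·α` and
`φ(y) = y^(q^r) - t^(1-q)·y^q`, one has `v(α) = -1`, `v(φ^i(x)) = d - q^i` for `i ≤ m`,
`v(φ^(m+1)(x)) = -q^(m+1) + q^m - 1`, `v(φ^(m+1+k)(x)) = q^(rk)(-q^(m+1) + q^m - 1)`,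
the local-height sequence converges to `V = (-q^(m+1) + q^m - 1)/q^(r(m+1))`, and
`0 < -V < q^(1-r)/d^(r-1)`. -/
theorem statement18
    (p q : ℕ) (hp : p.Prime) (hq : ∃ s : ℕ, 0 < s ∧ q = p ^ s)
    (r m : ℕ) (hr : 2 ≤ r) (hm : r ≤ m)
    [CharP L p]
    (v : L → WithTop ℤ) (hv : IsDVal v)
    (t : L) (ht : t ≠ 0) (hvt : v t = (((q : ℤ) ^ m - 1 : ℤ) : WithTop ℤ))
    (α : L) (hα : α ^ (q ^ m - 1) = α + 1 / t) :
    let φ : L → L := fun y => y ^ q ^ r - t ^ ((1 : ℤ) - (q : ℤ)) * y ^ q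
    let V : ℝ := (-(q : ℝ) ^ (m + 1) + (q : ℝ) ^ m - 1) / (q : ℝ) ^ (r * (m + 1))
    v α = ((-1 : ℤ) : WithTop ℤ) ∧
    (∀ i : ℕ, i ≤ m →
      v (φ^[i] (t * α)) = (((q : ℤ) ^ m - 1 - (q : ℤ) ^ i : ℤ) : WithTop ℤ)) ∧
    v (φ^[m + 1] (t * α))
      = ((-(q : ℤ) ^ (m + 1) + (q : ℤ) ^ m - 1 : ℤ) : WithTop ℤ) ∧
    (∀ j : ℕ,
      v (φ^[m + 1 + j] (t * α))
        = (((q : ℤ) ^ (r * j) * (-(q : ℤ) ^ (m + 1) + (q : ℤ) ^ m - 1) : ℤ) : WithTop ℤ)) ∧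
    Filter.Tendsto (locSeq q r v φ (t * α)) Filter.atTop (nhds V) ∧
    0 < -V ∧
    -V < (q : ℝ) ^ ((1 : ℤ) - (r : ℤ)) / ((q : ℝ) ^ m - 1) ^ (r - 1) := by

  intro φ V
  have hφ : ∀ y : L, φ y = y ^ q ^ r - t ^ ((1 : ℤ) - (q : ℤ)) * y ^ q := fun y => rfl
  have hq2 : 2 ≤ q := by
    obtain ⟨s, hs, rfl⟩ := hq
    calc 2 ≤ p := hp.two_le
    _ = p ^ 1 := (pow_one p).symm
    _ ≤ p ^ s := Nat.pow_le_pow_right hp.pos hs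
  have hq1 : 1 ≤ q := by omega
  have hQ2 : (2:ℤ) ≤ (q:ℤ) := by exact_mod_cast hq2
  set D : ℤ := (q:ℤ) ^ m - 1 with hDdef
  have hm2 : 2 ≤ m := le_trans hr hm
  have hQm : 4 ≤ (q:ℤ) ^ m := by
    calc (4:ℤ) = 2 ^ 2 := by norm_num
    _ ≤ (q:ℤ) ^ 2 := pow_le_pow_left₀ (by norm_num) hQ2 2
    _ ≤ (q:ℤ) ^ m := pow_le_pow_right₀ (by omega) hm2
  have hD3 : 3 ≤ D := by omega
  -- v α = -1
  have hα0 : α ≠ 0 := by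
    intro h0
    have hd0 : q ^ m - 1 ≠ 0 := by
      have : 2 ≤ q ^ m := le_trans hq2 (Nat.le_self_pow (by omega) q)
      omega
    rw [h0, zero_pow hd0, zero_add, one_div] at hα
    exact ht (inv_eq_zero.mp hα.symm)
  have hinvt : v (1 / t) = ((-D : ℤ) : WithTop ℤ) := by
    rw [one_div]; exact hv.coe_inv hvt
  obtain ⟨a, ha⟩ := WithTop.ne_top_iff_exists.mp (hv.ne_top α hα0)
  have ha : v α = (a : WithTop ℤ) := ha.symm
  have hαd : v (α ^ (q ^ m - 1)) = ((D * a : ℤ) : WithTop ℤ) := by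
    rw [hv.coe_pow ha]
    congr 1
    have h1 : 1 ≤ q ^ m := Nat.one_le_pow _ _ (by omega)
    have : ((q ^ m - 1 : ℕ) : ℤ) = D := by
      rw [Nat.cast_sub h1, Nat.cast_pow, Nat.cast_one]
    rw [this]
  have hva : a = -1 := by
    rcases lt_trichotomy a (-D) with hlt | heq | hgt
    · exfalso
      have h1 : v (α + 1 / t) = (a : WithTop ℤ) :=
        (hv.add_left (by rw [ha, hinvt]; exact_mod_cast hlt)).trans ha
      rw [hα, h1] at hαd
      have : D * a = a := by exact_mod_cast hαd.symm
      nlinarith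
    · exfalso
      have h1 : ((-D : ℤ) : WithTop ℤ) ≤ v (α + 1 / t) := by
        have := hv.add_min α (1 / t)
        rw [ha, hinvt, heq, min_self] at this
        exact this
      rw [hα] at hαd
      rw [hαd, heq] at h1
      have : (-D : ℤ) ≤ D * (-D) := by exact_mod_cast h1
      nlinarith
    · have h1 : v (α + 1 / t) = ((-D : ℤ) : WithTop ℤ) :=
        (hv.add_right (by rw [ha, hinvt]; exact_mod_cast hgt)).trans hinvt
      rw [hα, h1] at hαd
      have h2 : D * a = -D := by exact_mod_cast hαd.symm
      have h3 : D * a = D * (-1) := by linarith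
      exact mul_left_cancel₀ (by omega) h3
  rw [hva] at ha
  have hx : v (t * α) = ((D - 1 : ℤ) : WithTop ℤ) := by
    rw [sub_eq_add_neg]; exact hv.coe_mul hvt ha
  -- claim 1 : i ≤ m
  have claim1 : ∀ i : ℕ, i ≤ m → v (φ^[i] (t * α)) = ((D - (q:ℤ) ^ i : ℤ) : WithTop ℤ) := by
    intro i
    induction i with
    | zero => intro _; simpa using hx
    | succ i ih =>
        intro him
        have hc := ih (by omega)
        rw [Function.iterate_succ_apply', hφ]
        have hQr : (q:ℤ) ≤ (q:ℤ) ^ r := le_self_pow₀ (by omega) (by omega)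
        have hP : 1 ≤ D - (q:ℤ) ^ i := by
          have h1 : (q:ℤ) ^ i * (q:ℤ) ≤ (q:ℤ) ^ m := by
            rw [← pow_succ]; exact pow_le_pow_right₀ (by omega) him
          have h4 : (1:ℤ) ≤ (q:ℤ) ^ i := one_le_pow₀ (by omega)
          nlinarith
        have hkey : (1 - (q:ℤ)) * D + q * (D - (q:ℤ) ^ i) < (q:ℤ) ^ r * (D - (q:ℤ) ^ i) := by
          nlinarith [mul_nonneg (sub_nonneg.mpr hQr) (by linarith : (0:ℤ) ≤ D - (q:ℤ) ^ i)]
        rw [step_t hv q r hq1 t D hvt _ _ hc hkey]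
        congr 1
        rw [hDdef]; ring
  -- claim at m+1
  set E : ℤ := -(q:ℤ) ^ (m + 1) + (q:ℤ) ^ m - 1 with hEdef
  have hQmm : (q:ℤ) ^ r ≤ (q:ℤ) ^ m := pow_le_pow_right₀ (by omega) hm
  have hQm1 : (q:ℤ) ^ (m + 1) = (q:ℤ) ^ m * q := pow_succ _ _
  have hEneg : E < 0 := by rw [hEdef]; nlinarith
  have claimE : v (φ^[m + 1] (t * α)) = (E : WithTop ℤ) := by
    rw [Function.iterate_succ_apply', hφ]
    have hc : v (φ^[m] (t * α)) = ((-1 : ℤ) : WithTop ℤ) := by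
      rw [claim1 m le_rfl]; congr 1; rw [hDdef]; ring
    have hkey : (1 - (q:ℤ)) * D + q * (-1) < (q:ℤ) ^ r * (-1) := by
      rw [hDdef]; nlinarith
    rw [step_t hv q r hq1 t D hvt _ _ hc hkey]
    congr 1
    rw [hDdef, hEdef]; ring
  -- claim 2 : beyond m+1
  have claim2 : ∀ j : ℕ,
      v (φ^[m + 1 + j] (t * α)) = (((q:ℤ) ^ (r * j) * E : ℤ) : WithTop ℤ) := by
    intro j
    induction j with
    | zero => simpa using claimE
    | succ j ih =>
        have hstep : m + 1 + (j + 1) = (m + 1 + j) + 1 := by omega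
        rw [hstep, Function.iterate_succ_apply', hφ]
        set c : ℤ := (q:ℤ) ^ (r * j) * E with hcdef
        have hcE : c ≤ E := by
          have h1 : (1:ℤ) ≤ (q:ℤ) ^ (r * j) := one_le_pow₀ (by omega)
          nlinarith
        have hcneg : c < 0 := lt_of_le_of_lt hcE hEneg
        have hQr2 : (q:ℤ) + 1 ≤ (q:ℤ) ^ r := by
          calc (q:ℤ) + 1 ≤ (q:ℤ) * (q:ℤ) := by nlinarith
          _ = (q:ℤ) ^ 2 := (sq (q:ℤ)).symm
          _ ≤ (q:ℤ) ^ r := pow_le_pow_right₀ (by omega) hr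
        have hkey : (q:ℤ) ^ r * c < (1 - (q:ℤ)) * D + q * c := by
          have hE' : (1 - (q:ℤ)) * D = E + q := by rw [hEdef, hDdef, hQm1]; ring
          linarith [mul_nonneg (by linarith : (0:ℤ) ≤ (q:ℤ) ^ r - q - 1) (by linarith : (0:ℤ) ≤ -c)]
        rw [step_y hv q r hq1 t D hvt _ _ ih hkey]
        congr 1
        rw [mul_add, mul_one, pow_add]; ring
  -- convergence
  have hqR : (2:ℝ) ≤ (q:ℝ) := by exact_mod_cast hq2
  have hconst : ∀ n : ℕ, m + 1 ≤ n → locSeq q r v φ (t * α) n = V := by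
    intro n hn
    obtain ⟨j, rfl⟩ : ∃ j : ℕ, n = m + 1 + j := ⟨n - (m + 1), by omega⟩
    unfold locSeq vz
    rw [claim2 j, WithTop.untopD_coe]
    have hc0 : (q:ℤ) ^ (r * j) * E ≤ 0 := by
      have h1 : (1:ℤ) ≤ (q:ℤ) ^ (r * j) := one_le_pow₀ (by omega)
      nlinarith
    rw [min_eq_right hc0]
    have hpow : (q:ℝ) ^ (r * (m + 1 + j)) = (q:ℝ) ^ (r * j) * (q:ℝ) ^ (r * (m + 1)) := by
      rw [← pow_add]; congr 1; ring
    show ((((q:ℤ) ^ (r * j) * E : ℤ) : ℝ)) / (q:ℝ) ^ (r * (m + 1 + j))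
        = (-(q:ℝ) ^ (m + 1) + (q:ℝ) ^ m - 1) / (q:ℝ) ^ (r * (m + 1))
    rw [hpow, hEdef]
    push_cast
    rw [mul_div_mul_left _ _ (by positivity : ((q:ℝ) ^ (r * j)) ≠ 0)]
  have htend : Filter.Tendsto (locSeq q r v φ (t * α)) Filter.atTop (nhds V) := by
    have : locSeq q r v φ (t * α) =ᶠ[Filter.atTop] (fun _ => V) := by
      filter_upwards [Filter.eventually_ge_atTop (m + 1)] with n hn using hconst n hn
    exact Filter.Tendsto.congr' this.symm tendsto_const_nhds
  -- inequalities
  have hpowpos : (0:ℝ) < (q:ℝ) ^ (r * (m + 1)) := by positivity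
  have hnum : -(q:ℝ) ^ (m + 1) + (q:ℝ) ^ m - 1 < 0 := by
    have h1 : (1:ℝ) ≤ (q:ℝ) ^ m := one_le_pow₀ (by linarith)
    have h2 : (q:ℝ) ^ (m + 1) = (q:ℝ) ^ m * q := pow_succ _ _
    nlinarith
  have hVneg : V < 0 := div_neg_of_neg_of_pos hnum hpowpos
  have hVpos : 0 < -V := by linarith
  refine ⟨ha, ?_, claimE, claim2, htend, hVpos, ?_⟩
  · intro i him
    have := claim1 i him
    rw [this]
  · -- -V < q^(1-r) / (q^m - 1)^(r-1)
    have h1r : ((1:ℤ) - (r:ℤ)) = -(((r - 1 : ℕ) : ℤ)) := by omega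
    have hqne : (q:ℝ) ≠ 0 := by positivity
    rw [h1r, zpow_neg, zpow_natCast]
    have hXm1 : (1:ℝ) < (q:ℝ) ^ m := by
      calc (1:ℝ) < 2 := one_lt_two
      _ ≤ (q:ℝ) := hqR
      _ = (q:ℝ) ^ 1 := (pow_one _).symm
      _ ≤ (q:ℝ) ^ m := pow_le_pow_right₀ (by linarith) (by omega)
    have hden2 : (0:ℝ) < (q:ℝ) ^ (r - 1) * ((q:ℝ) ^ m - 1) ^ (r - 1) := by
      apply mul_pos (by positivity)
      exact pow_pos (by linarith) _
    have hVval : -V = ((q:ℝ) ^ (m + 1) - (q:ℝ) ^ m + 1) / (q:ℝ) ^ (r * (m + 1)) := by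
      show -((-(q:ℝ) ^ (m + 1) + (q:ℝ) ^ m - 1) / (q:ℝ) ^ (r * (m + 1))) = _
      ring
    rw [hVval, div_lt_div_iff₀ hpowpos (pow_pos (by linarith : (0:ℝ) < (q:ℝ) ^ m - 1) (r - 1))]
    have key : ((q:ℝ) ^ (m + 1) - (q:ℝ) ^ m + 1) * ((q:ℝ) ^ m - 1) ^ (r - 1)
        < (q:ℝ) ^ (m + 1) * ((q:ℝ) ^ m) ^ (r - 1) := by
      have hb : ((q:ℝ) ^ m - 1) ^ (r - 1) ≤ ((q:ℝ) ^ m) ^ (r - 1) :=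
        pow_le_pow_left₀ (by linarith) (by linarith) _
      have hbpos : (0:ℝ) < ((q:ℝ) ^ m - 1) ^ (r - 1) := pow_pos (by linarith) _
      have ha' : (q:ℝ) ^ (m + 1) - (q:ℝ) ^ m + 1 < (q:ℝ) ^ (m + 1) := by linarith
      have hapos : (0:ℝ) < (q:ℝ) ^ (m + 1) - (q:ℝ) ^ m + 1 := by nlinarith
      calc ((q:ℝ) ^ (m + 1) - (q:ℝ) ^ m + 1) * ((q:ℝ) ^ m - 1) ^ (r - 1)
          < (q:ℝ) ^ (m + 1) * ((q:ℝ) ^ m - 1) ^ (r - 1) :=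
            mul_lt_mul_of_pos_right ha' hbpos
        _ ≤ (q:ℝ) ^ (m + 1) * ((q:ℝ) ^ m) ^ (r - 1) := by
            apply mul_le_mul_of_nonneg_left hb (by positivity)
    have hexps : (q:ℝ) ^ (m + 1) * ((q:ℝ) ^ m) ^ (r - 1) * (q:ℝ) ^ (r - 1)
        = (q:ℝ) ^ (r * (m + 1)) := by
      rw [← pow_mul, ← pow_add, ← pow_add]; congr 1
      obtain ⟨u, rfl⟩ := Nat.exists_eq_add_of_le (show 1 ≤ r by omega)
      simp only [Nat.add_sub_cancel_left]
      ring
    have heq2 : ((q:ℝ) ^ (r - 1))⁻¹ * (q:ℝ) ^ (r * (m + 1))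
        = (q:ℝ) ^ (m + 1) * ((q:ℝ) ^ m) ^ (r - 1) := by
      rw [← hexps, mul_comm ((q:ℝ) ^ (m + 1) * ((q:ℝ) ^ m) ^ (r - 1)) ((q:ℝ) ^ (r - 1)),
        inv_mul_cancel_left₀ (by positivity : ((q:ℝ) ^ (r - 1)) ≠ 0)]
    rw [heq2]
    exact key


end Drinfeld
end
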